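/- arXiv:1906.05089 — 4 statements merged into one kernel-verified Lean document; each statement's English description precedes it below -/
import Mathlib

section
/- For every integer n ≥ 3, there exists a maximal irredundant broadcast f on the path P_n whose cost equals the broadcast irredundance number ir_b(P_n) and such that H_f(x_1) ≠ ∅ and H_f(x_n) ≠ ∅, i.e. both endpoints of P_n are f-dominated. -/
open SimpleGraph

namespace Broadcast

variable {V : Type*} [Fintype V]

/-- The eccentricity of a vertex: the maximum distance from `v` to any vertex. -/
noncomputable def ecc (G : SimpleGraph V) (v : V) : ℕ :=
  Finset.univ.sup fun u => G.dist v u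

/-- A broadcast on `G`: `f v ≤ e_G(v)` for every vertex `v`. -/
def IsBroadcast (G : SimpleGraph V) (f : V → ℕ) : Prop :=
  ∀ v, f v ≤ ecc G v

/-- The cost of a broadcast. -/
def cost (f : V → ℕ) : ℕ := ∑ v, f v

/-- `hears G f u` is H_f(u): the set of f-broadcast vertices `v` with `d(u,v) ≤ f v`. -/
def hears (G : SimpleGraph V) (f : V → ℕ) (u : V) : Set V :=
  {v | 1 ≤ f v ∧ G.dist u v ≤ f v}

/-- A dominating broadcast: every vertex hears some broadcast vertex. -/
def IsDominating (G : SimpleGraph V) (f : V → ℕ) : Prop :=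
  IsBroadcast G f ∧ ∀ u, (hears G f u).Nonempty

/-- A minimal dominating broadcast. -/
def IsMinimalDominating (G : SimpleGraph V) (f : V → ℕ) : Prop :=
  IsDominating G f ∧ ∀ g, IsDominating G g → (∀ v, g v ≤ f v) → g = f

/-- The broadcast domination number γ_b: minimum cost of a dominating broadcast. -/
noncomputable def broadcastDomination (G : SimpleGraph V) : ℕ :=
  sInf {c | ∃ f, IsDominating G f ∧ cost f = c}

/-- The upper broadcast domination number Γ_b: maximum cost of a minimal dominating broadcast. -/
noncomputable def upperBroadcastDomination (G : SimpleGraph V) : ℕ :=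
  sSup {c | ∃ f, IsMinimalDominating G f ∧ cost f = c}

/-- The private f-neighborhood PN_f(v): vertices hearing only `v`. -/
def privateNbhd (G : SimpleGraph V) (f : V → ℕ) (v : V) : Set V :=
  {u | hears G f u = {v}}

open Classical in
/-- The private f-border PB_f(v). -/
noncomputable def privateBorder (G : SimpleGraph V) (f : V → ℕ) (v : V) : Set V :=
  if f v = 1 ∧ privateNbhd G f v = {v} then {v}
  else {u | u ∈ privateNbhd G f v ∧ G.dist u v = f v}

/-- An irredundant broadcast: every broadcast vertex has a nonempty private border. -/
def IsIrredundant (G : SimpleGraph V) (f : V → ℕ) : Prop :=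
  IsBroadcast G f ∧ ∀ v, 1 ≤ f v → (privateBorder G f v).Nonempty

/-- A maximal irredundant broadcast. -/
def IsMaximalIrredundant (G : SimpleGraph V) (f : V → ℕ) : Prop :=
  IsIrredundant G f ∧ ∀ g, IsIrredundant G g → (∀ v, f v ≤ g v) → g = f

/-- The upper broadcast irredundance number IR_b: maximum cost of an irredundant broadcast. -/
noncomputable def upperBroadcastIrredundance (G : SimpleGraph V) : ℕ :=
  sSup {c | ∃ f, IsIrredundant G f ∧ cost f = c}

/-- The broadcast irredundance number ir_b: minimum cost of a maximal irredundant broadcast. -/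
noncomputable def broadcastIrredundance (G : SimpleGraph V) : ℕ :=
  sInf {c | ∃ f, IsMaximalIrredundant G f ∧ cost f = c}

/-- An independent broadcast: every broadcast vertex hears only itself, i.e. |H_f(v)| = 1. -/
def IsIndependent (G : SimpleGraph V) (f : V → ℕ) : Prop :=
  IsBroadcast G f ∧ ∀ v, 1 ≤ f v → hears G f v = {v}

/-- A maximal independent broadcast. -/
def IsMaximalIndependent (G : SimpleGraph V) (f : V → ℕ) : Prop :=
  IsIndependent G f ∧ ∀ g, IsIndependent G g → (∀ v, f v ≤ g v) → g = f

/-- The broadcast independence number β_b: maximum cost of an independent broadcast. -/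
noncomputable def broadcastIndependence (G : SimpleGraph V) : ℕ :=
  sSup {c | ∃ f, IsIndependent G f ∧ cost f = c}

/-- The lower broadcast independence number i_b: minimum cost of a maximal independent broadcast. -/
noncomputable def lowerBroadcastIndependence (G : SimpleGraph V) : ℕ :=
  sInf {c | ∃ f, IsMaximalIndependent G f ∧ cost f = c}

/-- A packing broadcast: every vertex hears at most one broadcast vertex. -/
def IsPacking (G : SimpleGraph V) (f : V → ℕ) : Prop :=
  IsBroadcast G f ∧ ∀ u, (hears G f u).Subsingleton

/-- A maximal packing broadcast. -/
def IsMaximalPacking (G : SimpleGraph V) (f : V → ℕ) : Prop :=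
  IsPacking G f ∧ ∀ g, IsPacking G g → (∀ v, f v ≤ g v) → g = f

/-- The broadcast packing number P_b: maximum cost of a packing broadcast. -/
noncomputable def broadcastPacking (G : SimpleGraph V) : ℕ :=
  sSup {c | ∃ f, IsPacking G f ∧ cost f = c}

/-- The lower broadcast packing number p_b: minimum cost of a maximal packing broadcast. -/
noncomputable def lowerBroadcastPacking (G : SimpleGraph V) : ℕ :=
  sInf {c | ∃ f, IsMaximalPacking G f ∧ cost f = c}

end Broadcast

namespace PGAux

variable {n : ℕ}

theorem nd_def (a b : ℕ) : Nat.dist a b = a - b + (b - a) := rfl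

theorem pg_connected (hn : 1 ≤ n) : (SimpleGraph.pathGraph n).Connected := by
  obtain ⟨m, rfl⟩ := Nat.exists_eq_succ_of_ne_zero (by omega : n ≠ 0)
  exact pathGraph_connected m

theorem pg_dist_le (hn : 1 ≤ n) : ∀ (k : ℕ) (u v : Fin n), Nat.dist u.val v.val ≤ k →
    (pathGraph n).dist u v ≤ k := by
  intro k
  induction k with
  | zero =>
    intro u v h
    have huv : u = v := Fin.ext (by simp [nd_def] at h; omega)
    subst huv
    simp [SimpleGraph.dist_self]
  | succ k ih =>
    intro u v h
    rcases eq_or_ne u v with rfl | hne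
    · simp [SimpleGraph.dist_self]
    have hval : u.val ≠ v.val := fun hc => hne (Fin.ext hc)
    rcases lt_or_gt_of_ne hval with hlt | hgt
    · have hw : u.val + 1 < n := lt_of_le_of_lt hlt v.isLt
      set w : Fin n := ⟨u.val + 1, hw⟩ with hwdef
      have hadj : (pathGraph n).Adj u w := pathGraph_adj.mpr (Or.inl rfl)
      have h1 : (pathGraph n).dist u w = 1 := dist_eq_one_iff_adj.mpr hadj
      have h2 : (pathGraph n).dist w v ≤ k := ih w v (by rw [nd_def] at h ⊢; have hwv : w.val = u.val + 1 := rfl; omega)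
      calc (pathGraph n).dist u v ≤ _ + _ := (pg_connected hn).dist_triangle (v := w)
        _ ≤ k + 1 := by omega
    · have hw : u.val - 1 < n := by omega
      set w : Fin n := ⟨u.val - 1, hw⟩ with hwdef
      have hadj : (pathGraph n).Adj u w := pathGraph_adj.mpr (Or.inr (by simp [hwdef]; omega))
      have h1 : (pathGraph n).dist u w = 1 := dist_eq_one_iff_adj.mpr hadj
      have h2 : (pathGraph n).dist w v ≤ k := ih w v (by rw [nd_def] at h ⊢; have hwv : w.val = u.val - 1 := rfl; omega)
      calc (pathGraph n).dist u v ≤ _ + _ := (pg_connected hn).dist_triangle (v := w)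
        _ ≤ k + 1 := by omega

theorem pg_walk_ge {u v : Fin n} (p : (pathGraph n).Walk u v) :
    Nat.dist u.val v.val ≤ p.length := by
  induction p with
  | nil => simp [nd_def]
  | @cons a b c h q ih =>
    have hab : a.val + 1 = b.val ∨ b.val + 1 = a.val := pathGraph_adj.mp h
    simp only [SimpleGraph.Walk.length_cons]
    simp [nd_def] at ih ⊢
    omega

theorem pg_dist (hn : 1 ≤ n) (u v : Fin n) :
    (pathGraph n).dist u v = Nat.dist u.val v.val := by
  refine le_antisymm (pg_dist_le hn _ u v le_rfl) ?_
  obtain ⟨p, hp⟩ := ((pg_connected hn).preconnected u v).exists_walk_length_eq_dist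
  calc Nat.dist u.val v.val ≤ p.length := pg_walk_ge p
    _ = _ := hp

end PGAux

section PGB

open Broadcast Finset

variable {n : ℕ}

theorem mem_hears (hn : 1 ≤ n) {f : Fin n → ℕ} {u v : Fin n} :
    v ∈ hears (SimpleGraph.pathGraph n) f u ↔ 1 ≤ f v ∧ Nat.dist u.val v.val ≤ f v := by
  show (1 ≤ f v ∧ (SimpleGraph.pathGraph n).dist u v ≤ f v) ↔ _
  rw [PGAux.pg_dist hn]

theorem one_le_ecc (hn : 2 ≤ n) (v : Fin n) : 1 ≤ ecc (SimpleGraph.pathGraph n) v := by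
  by_cases h0 : v.val = 0
  · have h1 : (1:ℕ) < n := by omega
    refine le_trans ?_ (Finset.le_sup (f := fun u => (SimpleGraph.pathGraph n).dist v u)
      (Finset.mem_univ (⟨1, h1⟩ : Fin n)))
    show 1 ≤ (SimpleGraph.pathGraph n).dist v ⟨1, h1⟩
    rw [PGAux.pg_dist (by omega)]
    simp only [PGAux.nd_def]
    omega
  · refine le_trans ?_ (Finset.le_sup (f := fun u => (SimpleGraph.pathGraph n).dist v u)
      (Finset.mem_univ (⟨0, by omega⟩ : Fin n)))
    show 1 ≤ (SimpleGraph.pathGraph n).dist v ⟨0, by omega⟩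
    rw [PGAux.pg_dist (by omega)]
    simp only [PGAux.nd_def]
    omega

/-- The witness broadcast: `1` on `{i ≡ 1 [MOD 3]}`, plus `n-1` when `n ≡ 1 [MOD 3]`. -/
def fS (n : ℕ) : Fin n → ℕ :=
  fun i => if i.val % 3 = 1 ∨ (i.val = n - 1 ∧ n % 3 = 1) then 1 else 0

theorem fS_le_one (i : Fin n) : fS n i ≤ 1 := by
  simp only [fS]; split <;> omega

theorem fS_broadcast (hn : 3 ≤ n) : IsBroadcast (SimpleGraph.pathGraph n) (fS n) :=
  fun v => le_trans (fS_le_one v) (one_le_ecc (by omega) v)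

theorem fS_dom (hn : 3 ≤ n) (u : Fin n) :
    ∃ s : Fin n, fS n s = 1 ∧ Nat.dist u.val s.val ≤ 1 := by
  have hu := u.isLt
  by_cases h1 : u.val % 3 = 1
  · refine ⟨u, ?_, by simp [PGAux.nd_def]⟩
    simp only [fS]; rw [if_pos (Or.inl h1)]
  by_cases h2 : u.val % 3 = 2
  · refine ⟨⟨u.val - 1, by omega⟩, ?_, by simp only [PGAux.nd_def]; omega⟩
    simp only [fS]; rw [if_pos]; left; omega
  by_cases h3 : u.val = n - 1
  · refine ⟨u, ?_, by simp [PGAux.nd_def]⟩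
    simp only [fS]; rw [if_pos]; right; exact ⟨h3, by omega⟩
  · refine ⟨⟨u.val + 1, by omega⟩, ?_, by simp only [PGAux.nd_def]; omega⟩
    simp only [fS]; rw [if_pos]; left; omega

theorem hears_fS (hn : 3 ≤ n) (x v : Fin n) :
    v ∈ hears (SimpleGraph.pathGraph n) (fS n) x ↔
      ((v.val % 3 = 1 ∨ (v.val = n - 1 ∧ n % 3 = 1)) ∧ Nat.dist x.val v.val ≤ 1) := by
  rw [mem_hears (by omega)]
  simp only [fS]
  split <;> rename_i h
  · simp [h]
  · simp [h]

theorem fS_irred (hn : 3 ≤ n) : IsIrredundant (SimpleGraph.pathGraph n) (fS n) := by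
  refine ⟨fS_broadcast hn, fun v hv => ?_⟩
  have hv1 : fS n v = 1 := le_antisymm (fS_le_one v) hv
  have hvc : v.val % 3 = 1 ∨ (v.val = n - 1 ∧ n % 3 = 1) := by
    by_contra hc
    simp only [fS, if_neg hc] at hv1
    omega
  have hvlt := v.isLt
  by_cases h1 : v.val % 3 = 1
  · -- border contains v - 1
    have hvpos : 1 ≤ v.val := by omega
    set b : Fin n := ⟨v.val - 1, by omega⟩ with hb
    have hbPN : b ∈ privateNbhd (SimpleGraph.pathGraph n) (fS n) v := by
      show hears _ _ b = {v}
      ext w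
      rw [hears_fS hn, Set.mem_singleton_iff]
      constructor
      · rintro ⟨hw1, hw2⟩
        have hwlt := w.isLt
        apply Fin.ext
        simp only [PGAux.nd_def, hb] at hw2
        rcases hw1 with h | h <;> omega
      · rintro rfl
        exact ⟨Or.inl h1, by simp only [PGAux.nd_def, hb]; omega⟩
    have hbne : b ≠ v := by
      intro h
      have := congrArg Fin.val h
      simp only [hb] at this
      omega
    have hPNne : ¬ (fS n v = 1 ∧ privateNbhd (SimpleGraph.pathGraph n) (fS n) v = {v}) := by
      rintro ⟨-, h⟩
      rw [h] at hbPN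
      exact hbne hbPN
    unfold privateBorder
    rw [if_neg hPNne]
    refine ⟨b, hbPN, ?_⟩
    rw [PGAux.pg_dist (by omega), hv1]
    simp only [PGAux.nd_def, hb]
    omega
  · have hv0 : v.val = n - 1 ∧ n % 3 = 1 := hvc.resolve_left h1
    have hn4 : 4 ≤ n := by omega
    have hPN : privateNbhd (SimpleGraph.pathGraph n) (fS n) v = {v} := by
      ext x
      rw [Set.mem_singleton_iff]
      constructor
      · intro hx
        have hxv : v ∈ hears (SimpleGraph.pathGraph n) (fS n) x := by
          rw [show hears (SimpleGraph.pathGraph n) (fS n) x = {v} from hx]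
          rfl
        rw [hears_fS hn] at hxv
        by_contra hxne
        have hxval : x.val ≠ v.val := fun hc => hxne (Fin.ext hc)
        have hxv2 := hxv.2
        have hxlt := x.isLt
        have hxn2 : x.val = n - 2 := by
          simp only [PGAux.nd_def] at hxv2
          omega
        have hs : (⟨n - 3, by omega⟩ : Fin n) ∈ hears (SimpleGraph.pathGraph n) (fS n) x := by
          rw [hears_fS hn]
          constructor
          · left
            show (n - 3) % 3 = 1
            omega
          · show Nat.dist x.val (n - 3) ≤ 1
            simp only [PGAux.nd_def]
            omega
        rw [show hears (SimpleGraph.pathGraph n) (fS n) x = {v} from hx,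
          Set.mem_singleton_iff] at hs
        have hval : n - 3 = v.val := congrArg Fin.val hs
        omega
      · intro hx
        subst hx
        show hears _ _ x = {x}
        ext w
        rw [hears_fS hn, Set.mem_singleton_iff]
        constructor
        · rintro ⟨hw1, hw2⟩
          have hwlt := w.isLt
          apply Fin.ext
          simp only [PGAux.nd_def] at hw2
          rcases hw1 with h | h <;> omega
        · rintro rfl
          exact ⟨Or.inr hv0, by simp [PGAux.nd_def]⟩
    unfold privateBorder
    rw [if_pos ⟨hv1, hPN⟩]
    exact ⟨v, rfl⟩

theorem max01 (hn : 3 ≤ n) (f : Fin n → ℕ)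
    (hdom : ∀ u : Fin n, ∃ s, f s = 1 ∧ Nat.dist u.val s.val ≤ 1)
    (hirr : IsIrredundant (SimpleGraph.pathGraph n) f) :
    IsMaximalIrredundant (SimpleGraph.pathGraph n) f := by
  refine ⟨hirr, fun g hg hge => ?_⟩
  funext v
  by_contra hne
  have hlt : f v < g v := lt_of_le_of_ne (hge v) (fun h => hne h.symm)
  have h1 : 1 ≤ g v := by omega
  have hbor := hg.2 v h1
  have key : ∀ x : Fin n, x ∈ privateNbhd (SimpleGraph.pathGraph n) g v →
      (f v = 1 ∧ Nat.dist x.val v.val ≤ 1) := by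
    intro x hx
    obtain ⟨s, hs1, hsd⟩ := hdom x
    have hsh : s ∈ hears (SimpleGraph.pathGraph n) g x := by
      rw [mem_hears (by omega)]
      constructor
      · have := hge s; omega
      · have := hge s; omega
    rw [show hears (SimpleGraph.pathGraph n) g x = {v} from hx, Set.mem_singleton_iff] at hsh
    subst hsh
    exact ⟨hs1, hsd⟩
  by_cases hc : g v = 1 ∧ privateNbhd (SimpleGraph.pathGraph n) g v = {v}
  · have hvPN : v ∈ privateNbhd (SimpleGraph.pathGraph n) g v := by
      rw [hc.2]; rfl
    have := key v hvPN
    omega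
  · unfold privateBorder at hbor
    rw [if_neg hc] at hbor
    obtain ⟨x, hxPN, hxd⟩ := hbor
    obtain ⟨hfv, hxv⟩ := key x hxPN
    rw [PGAux.pg_dist (by omega)] at hxd
    omega

theorem blame (hn : 3 ≤ n) (f : Fin n → ℕ)
    (hmax : IsMaximalIrredundant (SimpleGraph.pathGraph n) f)
    (u : Fin n) (hu : ∀ v, ¬(1 ≤ f v ∧ Nat.dist u.val v.val ≤ f v)) :
    ∃ w : Fin n, 1 ≤ f w ∧ Nat.dist u.val w.val = f w + 1 ∧
      (∃ b, b ∈ privateNbhd (SimpleGraph.pathGraph n) f w ∧ Nat.dist b.val w.val = f w) ∧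
      (∀ x : Fin n, x ∈ privateNbhd (SimpleGraph.pathGraph n) f w →
        Nat.dist x.val w.val = f w → Nat.dist x.val u.val = 1) ∧
      (f w = 1 → ∃ w', w' ≠ w ∧ 1 ≤ f w' ∧ Nat.dist w.val w'.val ≤ f w') := by
  obtain ⟨⟨hbr, hirr⟩, hmx⟩ := hmax
  have h1n : 1 ≤ n := by omega
  have hfu : f u = 0 := by
    by_contra h
    exact hu u ⟨by omega, by simp [PGAux.nd_def]⟩
  set g : Fin n → ℕ := Function.update f u 1 with hgdef
  have hgu : g u = 1 := Function.update_self u 1 f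
  have hgv : ∀ v, v ≠ u → g v = f v := fun v hv => Function.update_of_ne hv 1 f
  have hge : ∀ v, f v ≤ g v := by
    intro v
    by_cases h : v = u
    · subst h; rw [hgu, hfu]; omega
    · rw [hgv v h]
  have hgne : g ≠ f := by
    intro h
    have := congrFun h u
    rw [hgu, hfu] at this
    omega
  have hgbr : IsBroadcast (SimpleGraph.pathGraph n) g := by
    intro v
    by_cases h : v = u
    · subst h; rw [hgu]; exact one_le_ecc (by omega) v
    · rw [hgv v h]; exact hbr v
  have hgnotirr : ¬ IsIrredundant (SimpleGraph.pathGraph n) g :=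
    fun h => hgne (hmx g h hge)
  have hex : ∃ w, 1 ≤ g w ∧ privateBorder (SimpleGraph.pathGraph n) g w = ∅ := by
    by_contra hc
    push_neg at hc
    exact hgnotirr ⟨hgbr, fun v hv => hc v hv⟩
  obtain ⟨w, hgw1, hwE⟩ := hex
  have hhg : ∀ (x v : Fin n), v ∈ hears (SimpleGraph.pathGraph n) g x ↔
      (v ∈ hears (SimpleGraph.pathGraph n) f x ∨ (v = u ∧ Nat.dist x.val u.val ≤ 1)) := by
    intro x v
    rw [mem_hears h1n, mem_hears h1n]
    by_cases h : v = u
    · subst h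
      rw [hgu, hfu]
      constructor
      · rintro ⟨-, hd⟩; exact Or.inr ⟨rfl, hd⟩
      · rintro (⟨h0, -⟩ | ⟨-, hd⟩)
        · omega
        · exact ⟨le_refl 1, hd⟩
    · rw [hgv v h]
      constructor
      · exact Or.inl
      · rintro (hh | ⟨rfl, -⟩)
        · exact hh
        · exact absurd rfl h
  have hHgu : hears (SimpleGraph.pathGraph n) g u = {u} := by
    ext v
    rw [Set.mem_singleton_iff, hhg]
    constructor
    · rintro (hv | ⟨rfl, -⟩)
      · exact absurd ((mem_hears h1n).mp hv) (hu v)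
      · rfl
    · rintro rfl
      exact Or.inr ⟨rfl, by simp [PGAux.nd_def]⟩
  have hPBu : privateBorder (SimpleGraph.pathGraph n) g u ≠ ∅ := by
    have huPN : u ∈ privateNbhd (SimpleGraph.pathGraph n) g u := hHgu
    by_cases hPN : privateNbhd (SimpleGraph.pathGraph n) g u = {u}
    · have hB : privateBorder (SimpleGraph.pathGraph n) g u = {u} := by
        unfold privateBorder
        rw [if_pos ⟨hgu, hPN⟩]
      rw [hB]
      exact Set.singleton_ne_empty u
    · have hex2 : ∃ x, x ∈ privateNbhd (SimpleGraph.pathGraph n) g u ∧ x ≠ u := by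
        by_contra hc
        push_neg at hc
        apply hPN
        ext x
        rw [Set.mem_singleton_iff]
        exact ⟨fun hx => hc x hx, fun h => h ▸ huPN⟩
      obtain ⟨x, hxPN, hxw⟩ := hex2
      have hxh : u ∈ hears (SimpleGraph.pathGraph n) g x := by
        rw [show hears (SimpleGraph.pathGraph n) g x = {u} from hxPN]
        rfl
      rw [mem_hears h1n, hgu] at hxh
      have hdx : (SimpleGraph.pathGraph n).dist x u = g u := by
        rw [PGAux.pg_dist h1n, hgu]
        have hne2 : x.val ≠ u.val := fun hc => hxw (Fin.ext hc)
        have := hxh.2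
        simp only [PGAux.nd_def] at this ⊢
        omega
      unfold privateBorder
      rw [if_neg (fun hc => hPN hc.2)]
      exact Set.nonempty_iff_ne_empty.mp ⟨x, hxPN, hdx⟩
  have hwne : w ≠ u := fun h => hPBu (h ▸ hwE)
  have hgw : g w = f w := hgv w hwne
  have hfw1 : 1 ≤ f w := by rw [← hgw]; exact hgw1
  have hPNg : ∀ x, x ∈ privateNbhd (SimpleGraph.pathGraph n) g w ↔
      (x ∈ privateNbhd (SimpleGraph.pathGraph n) f w ∧ 1 < Nat.dist x.val u.val) := by
    intro x
    show hears _ g x = {w} ↔ (hears _ f x = {w} ∧ _)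
    constructor
    · intro hx
      have hwh : w ∈ hears (SimpleGraph.pathGraph n) f x := by
        have hm : w ∈ hears (SimpleGraph.pathGraph n) g x := by rw [hx]; rfl
        rcases (hhg x w).mp hm with h | ⟨h, -⟩
        · exact h
        · exact absurd h hwne
      have hnu : ¬ Nat.dist x.val u.val ≤ 1 := by
        intro hd
        have hm : u ∈ hears (SimpleGraph.pathGraph n) g x := (hhg x u).mpr (Or.inr ⟨rfl, hd⟩)
        rw [hx, Set.mem_singleton_iff] at hm
        exact hwne hm.symm
      refine ⟨?_, by omega⟩
      ext v
      rw [Set.mem_singleton_iff]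
      constructor
      · intro hv
        have hm : v ∈ hears (SimpleGraph.pathGraph n) g x := (hhg x v).mpr (Or.inl hv)
        rw [hx, Set.mem_singleton_iff] at hm
        exact hm
      · rintro rfl
        exact hwh
    · rintro ⟨hx, hd⟩
      ext v
      rw [Set.mem_singleton_iff]
      constructor
      · intro hv
        rcases (hhg x v).mp hv with h | ⟨rfl, hd2⟩
        · rw [← Set.mem_singleton_iff, ← hx]
          exact h
        · omega
      · intro hv
        rw [hv]
        refine (hhg x w).mpr (Or.inl ?_)
        rw [hx]
        rfl
  have hcondf : ¬ (f w = 1 ∧ privateNbhd (SimpleGraph.pathGraph n) f w = {w}) := by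
    rintro ⟨hfw, hPNf⟩
    by_cases hdw : Nat.dist w.val u.val ≤ 1
    · refine hu w ⟨hfw1, ?_⟩
      rw [hfw]
      simp only [PGAux.nd_def] at hdw ⊢
      omega
    · have hPNgw : privateNbhd (SimpleGraph.pathGraph n) g w = {w} := by
        ext x
        rw [Set.mem_singleton_iff, hPNg, hPNf, Set.mem_singleton_iff]
        constructor
        · rintro ⟨hx, -⟩; exact hx
        · rintro rfl; exact ⟨rfl, by omega⟩
      have hB : privateBorder (SimpleGraph.pathGraph n) g w = {w} := by
        unfold privateBorder
        rw [if_pos ⟨by rw [hgw, hfw], hPNgw⟩]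
      exact Set.singleton_ne_empty w (hB ▸ hwE)
  have hPBf := hirr w hfw1
  rw [show privateBorder (SimpleGraph.pathGraph n) f w =
      {x | x ∈ privateNbhd (SimpleGraph.pathGraph n) f w ∧ (SimpleGraph.pathGraph n).dist x w = f w} from
    by unfold privateBorder; rw [if_neg hcondf]] at hPBf
  obtain ⟨b, hbPN, hbd⟩ := hPBf
  have hcondg : ¬ (g w = 1 ∧ privateNbhd (SimpleGraph.pathGraph n) g w = {w}) := by
    rintro ⟨hc1, hc2⟩
    have hB : privateBorder (SimpleGraph.pathGraph n) g w = {w} := by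
      unfold privateBorder
      rw [if_pos ⟨hc1, hc2⟩]
    exact Set.singleton_ne_empty w (hB ▸ hwE)
  have hPBg : {x : Fin n | x ∈ privateNbhd (SimpleGraph.pathGraph n) g w ∧
      (SimpleGraph.pathGraph n).dist x w = g w} = ∅ := by
    unfold privateBorder at hwE
    rw [if_neg hcondg] at hwE
    exact hwE
  have hmain : ∀ x : Fin n, x ∈ privateNbhd (SimpleGraph.pathGraph n) f w →
      Nat.dist x.val w.val = f w → Nat.dist x.val u.val = 1 := by
    intro x hxPN hxd
    have hxd' : (SimpleGraph.pathGraph n).dist x w = g w := by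
      rw [PGAux.pg_dist h1n, hgw]
      exact hxd
    have hle : Nat.dist x.val u.val ≤ 1 := by
      by_contra hc
      exact Set.notMem_empty x (hPBg ▸ (⟨(hPNg x).mpr ⟨hxPN, by omega⟩, hxd'⟩ :
        x ∈ {x : Fin n | x ∈ privateNbhd (SimpleGraph.pathGraph n) g w ∧
          (SimpleGraph.pathGraph n).dist x w = g w}))
    have hxu : x ≠ u := by
      intro h
      subst h
      have hm : w ∈ hears (SimpleGraph.pathGraph n) f x := by
        rw [show hears (SimpleGraph.pathGraph n) f x = {w} from hxPN]
        rfl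
      rw [mem_hears h1n] at hm
      exact hu w hm
    have hne2 : x.val ≠ u.val := fun hc => hxu (Fin.ext hc)
    simp only [PGAux.nd_def] at hle ⊢
    omega
  have hbd' : Nat.dist b.val w.val = f w := by rw [← PGAux.pg_dist h1n]; exact hbd
  have hbu : Nat.dist b.val u.val = 1 := hmain b hbPN hbd'
  have hduw : Nat.dist u.val w.val = f w + 1 := by
    have hnle : ¬ Nat.dist u.val w.val ≤ f w := fun hc => hu w ⟨hfw1, hc⟩
    simp only [PGAux.nd_def] at hbu hbd' hnle ⊢
    omega
  refine ⟨w, hfw1, hduw, ⟨b, hbPN, hbd'⟩, hmain, ?_⟩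
  intro hfw
  have hsub : ∀ x, x ∈ privateNbhd (SimpleGraph.pathGraph n) g w → x = w := by
    intro x hx
    rw [hPNg] at hx
    obtain ⟨hxPN, hxd⟩ := hx
    by_contra hxw
    have hwh : w ∈ hears (SimpleGraph.pathGraph n) f x := by
      rw [show hears (SimpleGraph.pathGraph n) f x = {w} from hxPN]
      rfl
    rw [mem_hears h1n] at hwh
    have hne2 : x.val ≠ w.val := fun hc => hxw (Fin.ext hc)
    have hds : Nat.dist x.val w.val = f w := by
      have := hwh.2
      rw [hfw] at this ⊢
      simp only [PGAux.nd_def] at this ⊢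
      omega
    have := hmain x hxPN hds
    omega
  have hwnot : w ∉ privateNbhd (SimpleGraph.pathGraph n) g w := by
    intro hw
    apply hcondg
    refine ⟨by rw [hgw, hfw], ?_⟩
    ext x
    rw [Set.mem_singleton_iff]
    exact ⟨hsub x, fun h => h ▸ hw⟩
  have hwnotf : w ∉ privateNbhd (SimpleGraph.pathGraph n) f w := by
    intro hw
    refine hwnot ((hPNg w).mpr ⟨hw, ?_⟩)
    simp only [PGAux.nd_def] at hduw ⊢
    omega
  have hwin : w ∈ hears (SimpleGraph.pathGraph n) f w :=
    (mem_hears h1n).mpr ⟨hfw1, by simp [PGAux.nd_def]⟩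
  obtain ⟨w', hw'h, hw'ne⟩ : ∃ w', w' ∈ hears (SimpleGraph.pathGraph n) f w ∧ w' ≠ w := by
    by_contra hc
    push_neg at hc
    apply hwnotf
    show hears (SimpleGraph.pathGraph n) f w = {w}
    ext v
    rw [Set.mem_singleton_iff]
    exact ⟨fun hv => hc v hv, fun h => h ▸ hwin⟩
  rw [mem_hears h1n] at hw'h
  exact ⟨w', hw'ne, hw'h.1, hw'h.2⟩


theorem lower_bound (hn : 3 ≤ n) (f : Fin n → ℕ)
    (hmax : IsMaximalIrredundant (SimpleGraph.pathGraph n) f) : n ≤ 3 * cost f := by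
  classical
  set cov : Fin n → Prop := fun x => ∃ v, 1 ≤ f v ∧ Nat.dist x.val v.val ≤ f v with hcovdef
  have hblame : ∀ u : Fin n, ∃ w : Fin n, ¬ cov u → (1 ≤ f w ∧ Nat.dist u.val w.val = f w + 1 ∧
      (∃ b, b ∈ privateNbhd (SimpleGraph.pathGraph n) f w ∧ Nat.dist b.val w.val = f w) ∧
      (∀ x : Fin n, x ∈ privateNbhd (SimpleGraph.pathGraph n) f w →
        Nat.dist x.val w.val = f w → Nat.dist x.val u.val = 1) ∧
      (f w = 1 → ∃ w', w' ≠ w ∧ 1 ≤ f w' ∧ Nat.dist w.val w'.val ≤ f w')) := by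
    intro u
    by_cases hu : cov u
    · exact ⟨u, fun hc => absurd hu hc⟩
    · have hu' : ∀ v, ¬(1 ≤ f v ∧ Nat.dist u.val v.val ≤ f v) := by
        intro v hv
        exact hu ⟨v, hv⟩
      obtain ⟨w, hw⟩ := blame hn f hmax u hu'
      exact ⟨w, fun _ => hw⟩
  choose W hW using hblame
  have hinj : ∀ u u' : Fin n, ¬ cov u → ¬ cov u' → W u = W u' → u = u' := by
    intro u u' hu hu' he
    obtain ⟨hw1, hd, ⟨b, hbPN, hbd⟩, hall, -⟩ := hW u hu
    obtain ⟨-, hd', -, hall', -⟩ := hW u' hu'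
    rw [← he] at hd' hall'
    have hbu := hall b hbPN hbd
    have hbu' := hall' b hbPN hbd
    apply Fin.ext
    simp only [PGAux.nd_def] at hbu hbu' hd hd' hbd
    omega
  set U : Finset (Fin n) := Finset.univ.filter (fun x => ¬ cov x) with hU
  set Cv : Finset (Fin n) := Finset.univ.filter (fun x => cov x) with hCv
  set U1 : Finset (Fin n) := U.filter (fun u => f (W u) = 1) with hU1
  set U2 : Finset (Fin n) := U.filter (fun u => ¬ f (W u) = 1) with hU2
  set P1 : Finset (Fin n) := U1.image W with hP1
  have hUmem : ∀ u, u ∈ U → ¬ cov u := by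
    intro u hu
    rw [hU, Finset.mem_filter] at hu
    exact hu.2
  have hncard : Cv.card + U.card = n := by
    rw [hCv, hU, Finset.card_filter_add_card_filter_not, Finset.card_univ,
      Fintype.card_fin]
  have hUsplit : U1.card + U2.card = U.card := by
    rw [hU1, hU2, Finset.card_filter_add_card_filter_not]
  have hP1card : P1.card = U1.card := by
    apply Finset.card_image_of_injOn
    intro a ha b hb hab
    have ha' := Finset.mem_filter.mp (Finset.mem_coe.mp ha)
    have hb' := Finset.mem_filter.mp (Finset.mem_coe.mp hb)
    exact hinj a b (hUmem a ha'.1) (hUmem b hb'.1) hab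
  have hP2card : U2.card ≤ ∑ v : Fin n, (if 1 ≤ f v then f v - 1 else 0) := by
    have hinj2 : (U2.image W).card = U2.card := by
      apply Finset.card_image_of_injOn
      intro a ha b hb hab
      have ha' := Finset.mem_filter.mp (Finset.mem_coe.mp ha)
      have hb' := Finset.mem_filter.mp (Finset.mem_coe.mp hb)
      exact hinj a b (hUmem a ha'.1) (hUmem b hb'.1) hab
    rw [← hinj2]
    calc (U2.image W).card = ∑ _v ∈ U2.image W, 1 := by rw [Finset.card_eq_sum_ones]
      _ ≤ ∑ v ∈ U2.image W, (if 1 ≤ f v then f v - 1 else 0) := by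
          apply Finset.sum_le_sum
          intro w hw
          rw [Finset.mem_image] at hw
          obtain ⟨u, hu, rfl⟩ := hw
          rw [hU2, Finset.mem_filter] at hu
          obtain ⟨hw1, -⟩ := hW u (hUmem u hu.1)
          have := hu.2
          rw [if_pos hw1]
          omega
      _ ≤ ∑ v : Fin n, (if 1 ≤ f v then f v - 1 else 0) :=
          Finset.sum_le_sum_of_subset (Finset.subset_univ _)
  set Hc : Fin n → ℕ :=
    fun x => (Finset.univ.filter (fun v => 1 ≤ f v ∧ Nat.dist x.val v.val ≤ f v)).card with hHc
  have hT_lb : Cv.card + P1.card ≤ ∑ x : Fin n, Hc x := by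
    have hpt : ∀ x : Fin n, (if cov x then 1 else 0) + (if x ∈ P1 then 1 else 0) ≤ Hc x := by
      intro x
      by_cases hxP : x ∈ P1
      · rw [hP1, Finset.mem_image] at hxP
        obtain ⟨u0, hu0, hxw⟩ := hxP
        rw [hU1, Finset.mem_filter] at hu0
        obtain ⟨hw1, -, -, -, hlast⟩ := hW u0 (hUmem u0 hu0.1)
        obtain ⟨w', hw'ne, hw'1, hw'd⟩ := hlast hu0.2
        rw [hxw] at hw1 hw'ne hw'd
        have hmem1 : x ∈ Finset.univ.filter
            (fun v => 1 ≤ f v ∧ Nat.dist x.val v.val ≤ f v) :=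
          Finset.mem_filter.mpr ⟨Finset.mem_univ _, hw1, by simp [PGAux.nd_def]⟩
        have hmem2 : w' ∈ Finset.univ.filter
            (fun v => 1 ≤ f v ∧ Nat.dist x.val v.val ≤ f v) :=
          Finset.mem_filter.mpr ⟨Finset.mem_univ _, hw'1, hw'd⟩
        have h2 : 2 ≤ Hc x := by
          rw [hHc]
          exact Finset.one_lt_card.mpr ⟨x, hmem1, w', hmem2, fun h => hw'ne h.symm⟩
        have hcovx : cov x := ⟨x, hw1, by simp [PGAux.nd_def]⟩
        have hxP' : x ∈ P1 := by
          rw [hP1, Finset.mem_image]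
          exact ⟨u0, by rw [hU1, Finset.mem_filter]; exact hu0, hxw⟩
        rw [if_pos hcovx, if_pos hxP']
        omega
      · by_cases hxc : cov x
        · obtain ⟨v, hv1, hvd⟩ := hxc
          have h1 : 1 ≤ Hc x := by
            rw [hHc]
            exact Finset.card_pos.mpr ⟨v, Finset.mem_filter.mpr ⟨Finset.mem_univ _, hv1, hvd⟩⟩
          rw [if_pos (⟨v, hv1, hvd⟩ : cov x), if_neg hxP]
          omega
        · rw [if_neg hxc, if_neg hxP]
          omega
    calc Cv.card + P1.card
        = ∑ x : Fin n, ((if cov x then 1 else 0) + (if x ∈ P1 then 1 else 0)) := by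
          rw [Finset.sum_add_distrib]
          congr 1
          · rw [hCv, Finset.card_filter]
          · conv_lhs => rw [← Finset.filter_univ_mem P1]
            rw [Finset.card_filter]
      _ ≤ ∑ x : Fin n, Hc x := Finset.sum_le_sum (fun x _ => hpt x)
  have hT_ub : ∑ x : Fin n, Hc x ≤ ∑ v : Fin n, (if 1 ≤ f v then 2 * f v + 1 else 0) := by
    have hswap : ∑ x : Fin n, Hc x = ∑ v : Fin n,
        (Finset.univ.filter (fun x : Fin n => 1 ≤ f v ∧ Nat.dist x.val v.val ≤ f v)).card := by
      simp only [hHc, Finset.card_filter]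
      exact Finset.sum_comm
    rw [hswap]
    apply Finset.sum_le_sum
    intro v _
    by_cases hv : 1 ≤ f v
    · rw [if_pos hv]
      have hcard : (Finset.univ.filter
          (fun x : Fin n => 1 ≤ f v ∧ Nat.dist x.val v.val ≤ f v)).card ≤
          (Finset.Icc (v.val - f v) (v.val + f v)).card := by
        apply Finset.card_le_card_of_injOn (fun x => x.val)
        · intro x hx
          simp only [Finset.mem_coe, Finset.mem_filter] at hx
          simp only [Finset.mem_coe, Finset.mem_Icc]
          have := hx.2.2
          simp only [PGAux.nd_def] at this
          omega
        · exact fun a _ b _ h => Fin.ext h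
      rw [Nat.card_Icc] at hcard
      omega
    · rw [if_neg hv]
      rw [Finset.filter_false_of_mem (fun x _ => fun hc => hv hc.1), Finset.card_empty]
  have hfinal : ∀ v : Fin n,
      (if 1 ≤ f v then 2 * f v + 1 else 0) + (if 1 ≤ f v then f v - 1 else 0) ≤ 3 * f v := by
    intro v
    split_ifs <;> omega
  calc n = Cv.card + U.card := hncard.symm
    _ = Cv.card + (U1.card + U2.card) := by rw [hUsplit]
    _ = (Cv.card + P1.card) + U2.card := by rw [hP1card]; ring
    _ ≤ (∑ x : Fin n, Hc x) + U2.card := Nat.add_le_add_right hT_lb _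
    _ ≤ (∑ v : Fin n, (if 1 ≤ f v then 2 * f v + 1 else 0)) +
        (∑ v : Fin n, (if 1 ≤ f v then f v - 1 else 0)) := Nat.add_le_add hT_ub hP2card
    _ = ∑ v : Fin n, ((if 1 ≤ f v then 2 * f v + 1 else 0) + (if 1 ≤ f v then f v - 1 else 0)) :=
        (Finset.sum_add_distrib).symm
    _ ≤ ∑ v : Fin n, 3 * f v := Finset.sum_le_sum (fun v _ => hfinal v)
    _ = 3 * cost f := by rw [← Finset.mul_sum]; rfl


theorem sum_mod3 (m : ℕ) :
    (∑ i ∈ Finset.range m, if i % 3 = 1 then 1 else 0) = (m + 1) / 3 := by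
  induction m with
  | zero => simp
  | succ m ih =>
    rw [Finset.sum_range_succ, ih]
    split_ifs <;> omega

theorem fS_cost (hn : 3 ≤ n) : cost (fS n) = (n + 2) / 3 := by
  have h1 : cost (fS n) = ∑ i ∈ Finset.range n,
      (if i % 3 = 1 ∨ (i = n - 1 ∧ n % 3 = 1) then 1 else 0) := by
    show (∑ v : Fin n, fS n v) = _
    rw [← Fin.sum_univ_eq_sum_range (fun k => if k % 3 = 1 ∨ (k = n - 1 ∧ n % 3 = 1) then 1 else 0) n]
    rfl
  rw [h1]
  have hpt : ∀ i : ℕ, (if i % 3 = 1 ∨ (i = n - 1 ∧ n % 3 = 1) then (1:ℕ) else 0)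
      = (if i % 3 = 1 then 1 else 0) + (if i = n - 1 ∧ n % 3 = 1 ∧ ¬ i % 3 = 1 then 1 else 0) := by
    intro i
    split_ifs <;> omega
  rw [Finset.sum_congr rfl (fun i _ => hpt i), Finset.sum_add_distrib, sum_mod3]
  have h2 : (∑ i ∈ Finset.range n, if i = n - 1 ∧ n % 3 = 1 ∧ ¬ i % 3 = 1 then (1:ℕ) else 0)
      = if n % 3 = 1 then 1 else 0 := by
    by_cases hm : n % 3 = 1
    · rw [Finset.sum_eq_single_of_mem (n - 1) (Finset.mem_range.mpr (by omega))]
      · rw [if_pos ⟨rfl, hm, by omega⟩, if_pos hm]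
      · intro b _ hb
        rw [if_neg (fun hc => hb hc.1)]
    · rw [if_neg hm, Finset.sum_eq_zero]
      intro i _
      rw [if_neg (fun hc => hm hc.2.1)]
  rw [h2]
  split_ifs with hm <;> omega


end PGB

open Broadcast in
/-- For every n ≥ 3, there exists an ir_b-broadcast f on P_n such that
H_f(x_1) ≠ ∅ and H_f(x_n) ≠ ∅. -/
theorem exists_irb_broadcast_endpoints_dominated_pathGraph (n : ℕ) (hn : 3 ≤ n) :
    ∃ f : Fin n → ℕ, IsMaximalIrredundant (SimpleGraph.pathGraph n) f ∧
      cost f = broadcastIrredundance (SimpleGraph.pathGraph n) ∧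
      hears (SimpleGraph.pathGraph n) f ⟨0, by omega⟩ ≠ ∅ ∧
      hears (SimpleGraph.pathGraph n) f ⟨n - 1, by omega⟩ ≠ ∅ := by
  have h1n : (1:ℕ) ≤ n := by omega
  have hmax := max01 hn (fS n) (fS_dom hn) (fS_irred hn)
  have hmem : cost (fS n) ∈
      {c | ∃ f, IsMaximalIrredundant (SimpleGraph.pathGraph n) f ∧ cost f = c} :=
    ⟨fS n, hmax, rfl⟩
  have hub : broadcastIrredundance (SimpleGraph.pathGraph n) ≤ cost (fS n) :=
    Nat.sInf_le hmem
  have hlb : cost (fS n) ≤ broadcastIrredundance (SimpleGraph.pathGraph n) := by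
    apply le_csInf ⟨_, hmem⟩
    rintro c ⟨f, hf, rfl⟩
    have hlow := lower_bound hn f hf
    rw [fS_cost hn]
    omega
  refine ⟨fS n, hmax, le_antisymm hlb hub, ?_, ?_⟩
  · obtain ⟨s, hs1, hsd⟩ := fS_dom hn ⟨0, by omega⟩
    refine Set.nonempty_iff_ne_empty.mp ⟨s, (mem_hears h1n).mpr ⟨by omega, ?_⟩⟩
    rw [hs1]
    exact hsd
  · obtain ⟨s, hs1, hsd⟩ := fS_dom hn ⟨n - 1, by omega⟩
    refine Set.nonempty_iff_ne_empty.mp ⟨s, (mem_hears h1n).mpr ⟨by omega, ?_⟩⟩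
    rw [hs1]
    exact hsd
end

section
/- For every integer n ≥ 2, the broadcast irredundance number of the path P_n equals its broadcast domination number and both equal ⌈n/3⌉, i.e. ir_b(P_n) = γ_b(P_n) = ⌈n/3⌉. -/
open SimpleGraph

section PathLemmas

theorem nat_dist_le_walk_length {n : ℕ} {u v : Fin n} (p : (pathGraph n).Walk u v) :
    Nat.dist u.val v.val ≤ p.length := by
  induction p with
  | nil => simp
  | @cons a b c hadj p ih =>
    have h1 : Nat.dist a.val b.val = 1 := by
      rcases (pathGraph_adj).1 hadj with h | h <;> simp [Nat.dist] <;> omega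
    calc Nat.dist a.val c.val ≤ Nat.dist a.val b.val + Nat.dist b.val c.val :=
          Nat.dist.triangle_inequality _ _ _
      _ ≤ 1 + p.length := by omega
      _ = (SimpleGraph.Walk.cons hadj p).length := by simp [SimpleGraph.Walk.length_cons]; omega

theorem pathGraph_exists_walk {n : ℕ} (u v : Fin n) :
    ∃ p : (pathGraph n).Walk u v, p.length = Nat.dist u.val v.val := by
  obtain ⟨d, hd⟩ : ∃ d, Nat.dist u.val v.val = d := ⟨_, rfl⟩
  induction d generalizing u with
  | zero =>
    have : u = v := by
      apply Fin.ext
      simp [Nat.dist] at hd; omega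
    subst this; exact ⟨SimpleGraph.Walk.nil, by simpa using hd.symm⟩
  | succ d ih =>
    have hne : u.val ≠ v.val := by simp [Nat.dist] at hd ⊢; omega
    -- step from u toward v
    by_cases hlt : u.val < v.val
    · have hu1 : u.val + 1 < n := by have := v.isLt; omega
      let w : Fin n := ⟨u.val + 1, hu1⟩
      have hadj : (pathGraph n).Adj u w := pathGraph_adj.2 (Or.inl rfl)
      have hw : Nat.dist w.val v.val = d := by simp [Nat.dist, w] at hd ⊢; omega
      obtain ⟨p, hp⟩ := ih w hw
      exact ⟨SimpleGraph.Walk.cons hadj p, by simp [hp, hw, hd]⟩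
    · have hgt : v.val < u.val := by omega
      have hu1 : u.val - 1 < n := by have := u.isLt; omega
      let w : Fin n := ⟨u.val - 1, hu1⟩
      have hadj : (pathGraph n).Adj u w := pathGraph_adj.2 (Or.inr (by simp [w]; omega))
      have hw : Nat.dist w.val v.val = d := by simp [Nat.dist, w] at hd ⊢; omega
      obtain ⟨p, hp⟩ := ih w hw
      exact ⟨SimpleGraph.Walk.cons hadj p, by simp [hp, hw, hd]⟩

theorem pathGraph_dist {n : ℕ} (u v : Fin n) :
    (pathGraph n).dist u v = Nat.dist u.val v.val := by
  obtain ⟨p, hp⟩ := pathGraph_exists_walk u v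
  refine le_antisymm (hp ▸ SimpleGraph.dist_le p) ?_
  have hr : (pathGraph n).Reachable u v := ⟨p⟩
  obtain ⟨q, hq⟩ := hr.exists_walk_length_eq_dist
  exact hq ▸ nat_dist_le_walk_length q

end PathLemmas

namespace Broadcast

variable {V : Type*} [Fintype V]

variable {G : SimpleGraph V} {f g : V → ℕ}

lemma mem_hears {u v : V} : v ∈ hears G f u ↔ 1 ≤ f v ∧ G.dist u v ≤ f v := Iff.rfl

lemma self_mem_hears {v : V} (h : 1 ≤ f v) : v ∈ hears G f v :=
  ⟨h, by rw [SimpleGraph.dist_self]; omega⟩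

lemma hears_mono (hfg : ∀ v, f v ≤ g v) (u : V) : hears G f u ⊆ hears G g u := by
  intro x hx
  exact ⟨le_trans hx.1 (hfg x), le_trans hx.2 (hfg x)⟩

/-- From the else-branch characterization. -/
lemma privateBorder_of_not {v : V} (hv : ¬ (f v = 1 ∧ privateNbhd G f v = {v})) :
    privateBorder G f v = {u | u ∈ privateNbhd G f v ∧ G.dist u v = f v} := by
  rw [privateBorder, if_neg hv]

lemma privateBorder_of_branch {v : V} (hv : f v = 1 ∧ privateNbhd G f v = {v}) :
    privateBorder G f v = {v} := by
  rw [privateBorder, if_pos hv]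

/-- If f v = 1 and the private neighborhood is nonempty, the border is nonempty. -/
lemma privateBorder_nonempty_of_fv_one (hG : G.Connected) {v : V} (h1 : f v = 1)
    (hne : (privateNbhd G f v).Nonempty) : (privateBorder G f v).Nonempty := by
  classical
  by_cases hPN : privateNbhd G f v = {v}
  · exact ⟨v, by rw [privateBorder_of_branch ⟨h1, hPN⟩]; exact rfl⟩
  · obtain ⟨u, hu⟩ := hne
    have : ∃ w, w ∈ privateNbhd G f v ∧ w ≠ v := by
      by_cases huv : u = v
      · rw [huv] at hu
        have hsub : ¬ privateNbhd G f v ⊆ {v} := by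
          intro hs
          exact hPN (le_antisymm hs (by simpa using hu))
        obtain ⟨w, hwPN, hwv⟩ := Set.not_subset.1 hsub
        exact ⟨w, hwPN, by simpa using hwv⟩
      · exact ⟨u, hu, huv⟩
    obtain ⟨w, hwPN, hwv⟩ := this
    have hdist : G.dist w v ≤ f v := by
      have : v ∈ hears G f w := by rw [privateNbhd, Set.mem_setOf_eq] at hwPN; rw [hwPN]; rfl
      exact this.2
    have hpos : 0 < G.dist w v := hG.pos_dist_of_ne hwv
    have heq : G.dist w v = f v := by omega
    exact ⟨w, by rw [privateBorder_of_not (by simp [hPN])]; exact ⟨hwPN, heq⟩⟩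

/-- A minimal dominating broadcast is a maximal irredundant broadcast. -/
theorem isMaximalIrredundant_of_isMinimalDominating (hG : G.Connected)
    (hf : IsMinimalDominating G f) : IsMaximalIrredundant G f := by
  classical
  obtain ⟨⟨hbr, hdom⟩, hmin⟩ := hf
  have hirr : IsIrredundant G f := by
    refine ⟨hbr, fun v hv => ?_⟩
    set g : V → ℕ := Function.update f v (f v - 1) with hg
    have hgle : ∀ x, g x ≤ f x := by
      intro x
      by_cases hx : x = v
      · subst hx; simp [hg]
      · simp [hg, Function.update_of_ne hx]
    have hgbr : IsBroadcast G g := fun x => le_trans (hgle x) (hbr x)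
    have hgne : g ≠ f := by
      intro h
      have := congrFun h v
      simp [hg] at this
      omega
    have hgnd : ¬ ∀ u, (hears G g u).Nonempty := by
      intro h
      exact hgne (hmin g ⟨hgbr, h⟩ hgle)
    push_neg at hgnd
    obtain ⟨u, hu⟩ := hgnd
    obtain ⟨x, hx⟩ := hdom u
    have hxv : x = v := by
      by_contra hxv
      have : x ∈ hears G g u := by
        rw [mem_hears] at hx ⊢
        rwa [hg, Function.update_of_ne hxv]
      simp [hu] at this
    subst hxv
    have hPN : u ∈ privateNbhd G f x := by
      rw [privateNbhd, Set.mem_setOf_eq]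
      apply Set.eq_singleton_iff_unique_mem.2
      refine ⟨hx, fun y hy => ?_⟩
      by_contra hyx
      have : y ∈ hears G g u := by
        rw [mem_hears] at hy ⊢
        rwa [hg, Function.update_of_ne hyx]
      simp [hu] at this
    by_cases h1 : f x = 1
    · exact privateBorder_nonempty_of_fv_one hG h1 ⟨u, hPN⟩
    · have h2 : 2 ≤ f x := by omega
      have hnu : u ∉ hears G g u → True := fun _ => trivial
      have hxno : x ∉ hears G g u := by rw [hu]; exact not_false
      have hdu : G.dist u x = f x := by
        rw [mem_hears] at hx hxno
        rw [hg, Function.update_self] at hxno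
        push_neg at hxno
        have := hx.2
        by_cases hc : 1 ≤ f x - 1
        · have := hxno hc; omega
        · omega
      refine ⟨u, ?_⟩
      rw [privateBorder_of_not (by simp [h1])]
      exact ⟨hPN, hdu⟩
  refine ⟨hirr, fun g hg hle => ?_⟩
  by_contra hne
  obtain ⟨v0, hv0⟩ : ∃ v0, f v0 < g v0 := by
    by_contra h
    push_neg at h
    exact hne (funext fun v => le_antisymm (h v) (hle v))
  have hgv0 : 1 ≤ g v0 := by omega
  obtain ⟨w, hw⟩ := hg.2 v0 hgv0
  by_cases hbr2 : g v0 = 1 ∧ privateNbhd G g v0 = {v0}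
  · have hhv0 : hears G g v0 = {v0} := by
      have h' := hbr2.2
      have : v0 ∈ privateNbhd G g v0 := by rw [h']; rfl
      exact this
    obtain ⟨x, hx⟩ := hdom v0
    have : x ∈ hears G g v0 := hears_mono hle v0 hx
    rw [hhv0] at this
    have hxv0 : x = v0 := this
    subst hxv0
    have : 1 ≤ f x := hx.1
    omega
  · rw [privateBorder_of_not hbr2] at hw
    obtain ⟨hwPN, hwd⟩ := hw
    obtain ⟨x, hx⟩ := hdom w
    have : x ∈ hears G g w := hears_mono hle w hx
    rw [privateNbhd, Set.mem_setOf_eq] at hwPN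
    rw [hwPN] at this
    have hxv0 : x = v0 := this
    subst hxv0
    have h1 : G.dist w x ≤ f x := hx.2
    omega



theorem exists_isMinimalDominating_le (hf : IsDominating G f) :
    ∃ g, IsMinimalDominating G g ∧ cost g ≤ cost f := by
  classical
  set S : Set ℕ := {c | ∃ g, IsDominating G g ∧ (∀ v, g v ≤ f v) ∧ cost g = c} with hS
  have hSne : S.Nonempty := ⟨cost f, f, hf, fun v => le_refl _, rfl⟩
  obtain ⟨g, hgdom, hgle, hgc⟩ := Nat.sInf_mem hSne
  refine ⟨g, ⟨hgdom, fun h hh hhle => ?_⟩, ?_⟩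
  · have hhf : ∀ v, h v ≤ f v := fun v => le_trans (hhle v) (hgle v)
    have hmem : cost h ∈ S := ⟨h, hh, hhf, rfl⟩
    have h1 : sInf S ≤ cost h := Nat.sInf_le hmem
    have h2 : cost h ≤ cost g := Finset.sum_le_sum fun v _ => hhle v
    have h3 : cost h = cost g := by omega
    funext v
    have h4 : ∑ v, h v = ∑ v, g v := h3
    exact (Finset.sum_eq_sum_iff_of_le fun v _ => hhle v).1 h4 v (Finset.mem_univ v)
  · rw [hgc]
    exact Nat.sInf_le ⟨f, hf, fun v => le_refl _, rfl⟩

/-- Core witness extraction: if `f` is maximal irredundant and `u` hears nothing, then there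
is a broadcast vertex `x` whose private border would be destroyed by adding a unit broadcast
at `u`. -/
theorem exists_witness_of_unheard (hG : G.Connected) (hecc : ∀ v : V, 1 ≤ ecc G v)
    (hf : IsMaximalIrredundant G f) {u : V} (hu : hears G f u = ∅) :
    ∃ x, 1 ≤ f x ∧ f x + 1 ≤ G.dist u x ∧
      (privateBorder G f x).Nonempty ∧
      (∀ w', w' ∈ privateBorder G f x →
        w' ∈ privateNbhd G f x ∧ G.dist w' x = f x ∧ G.dist w' u = 1) ∧
      (f x = 1 → ∃ z, z ≠ x ∧ z ∈ hears G f x) := by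
  classical
  have hfu : f u = 0 := by
    by_contra h
    have : u ∈ hears G f u := self_mem_hears (by omega)
    simp [hu] at this
  set g : V → ℕ := Function.update f u 1 with hg
  have hgu : g u = 1 := by simp [hg]
  have hgne : ∀ v, v ≠ u → g v = f v := fun v hv => Function.update_of_ne hv _ _
  have hge : ∀ v, f v ≤ g v := by
    intro v
    by_cases hv : v = u
    · subst hv; omega
    · rw [hgne v hv]
  have hgbr : IsBroadcast G g := by
    intro v
    by_cases hv : v = u
    · subst hv; rw [hgu]; exact hecc v
    · rw [hgne v hv]; exact hf.1.1 v
  have hgf : g ≠ f := by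
    intro h
    have := congrFun h u
    rw [hgu, hfu] at this
    exact one_ne_zero this
  -- the key hears computation for g
  have hhg : ∀ w' v : V, v ∈ hears G g w' ↔
      (v ∈ hears G f w' ∨ (v = u ∧ G.dist w' u ≤ 1)) := by
    intro w' v
    by_cases hv : v = u
    · subst hv
      rw [mem_hears, mem_hears, hgu, hfu]
      simp
    · rw [mem_hears, mem_hears, hgne v hv]
      simp [hv]
  -- far vertices have unchanged hears
  have hhg' : ∀ w' : V, 2 ≤ G.dist w' u → hears G g w' = hears G f w' := by
    intro w' h2
    ext v
    rw [hhg]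
    constructor
    · rintro (h | ⟨rfl, h⟩)
      · exact h
      · omega
    · exact Or.inl
  -- g is not irredundant
  have hgirr : ¬ IsIrredundant G g := by
    intro h
    exact hgf (hf.2 g h hge)
  rw [IsIrredundant] at hgirr
  push_neg at hgirr
  obtain ⟨x, hx1, hxPB⟩ := hgirr hgbr
  -- u's own border in g is nonempty, so x ≠ u
  have hPNu : u ∈ privateNbhd G g u := by
    rw [privateNbhd, Set.mem_setOf_eq]
    ext v
    rw [hhg]
    constructor
    · rintro (h | ⟨rfl, _⟩)
      · rw [hu] at h; exact absurd h (Set.notMem_empty v)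
      · rfl
    · rintro rfl
      exact Or.inr ⟨rfl, by rw [SimpleGraph.dist_self]; omega⟩
  have hxu : x ≠ u := by
    rintro rfl
    have := privateBorder_nonempty_of_fv_one hG (by simpa using hgu) ⟨_, hPNu⟩
    rw [hxPB] at this
    exact Set.not_nonempty_empty this
  have hgx : g x = f x := hgne x hxu
  have hfx : 1 ≤ f x := by omega
  have hdux : f x + 1 ≤ G.dist u x := by
    have : x ∉ hears G f u := by rw [hu]; exact Set.notMem_empty x
    rw [mem_hears] at this
    push_neg at this
    have := this hfx
    omega
  have hdxu2 : 2 ≤ G.dist x u := by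
    rw [SimpleGraph.dist_comm]
    omega
  -- not the if-branch for f at x
  have hC1 : ¬ (f x = 1 ∧ privateNbhd G f x = {x}) := by
    rintro ⟨h1, hPN⟩
    have hhx : hears G f x = {x} := by
      have : x ∈ privateNbhd G f x := by rw [hPN]; rfl
      exact this
    have hPNg : privateNbhd G g x = {x} := by
      ext w'
      simp only [privateNbhd, Set.mem_setOf_eq, Set.mem_singleton_iff]
      constructor
      · intro hw'
        have hxh : x ∈ hears G f w' := by
          have : x ∈ hears G g w' := by rw [hw']; rfl
          rcases (hhg w' x).1 this with h | ⟨h, _⟩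
          · exact h
          · exact absurd h hxu
        have hsub : hears G f w' ⊆ {x} := by
          intro y hy
          have : y ∈ hears G g w' := (hhg w' y).2 (Or.inl hy)
          rw [hw'] at this
          exact this
        have : hears G f w' = {x} := le_antisymm hsub (by simpa using hxh)
        have : w' ∈ privateNbhd G f x := this
        rw [hPN] at this
        exact this
      · rintro rfl
        rw [hhg' _ hdxu2]
        exact hhx
    have : privateBorder G g x = {x} := privateBorder_of_branch ⟨by omega, hPNg⟩
    rw [hxPB] at this
    exact (Set.notMem_empty x (this ▸ rfl)).elim
  have hPBf : privateBorder G f x =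
      {w' | w' ∈ privateNbhd G f x ∧ G.dist w' x = f x} := privateBorder_of_not hC1
  -- not the if-branch for g at x either
  have hC2 : ¬ (g x = 1 ∧ privateNbhd G g x = {x}) := by
    rintro ⟨h1, hPN⟩
    have : privateBorder G g x = {x} := privateBorder_of_branch ⟨h1, hPN⟩
    rw [hxPB] at this
    exact (Set.notMem_empty x (this ▸ rfl)).elim
  have hPBg : privateBorder G g x =
      {w' | w' ∈ privateNbhd G g x ∧ G.dist w' x = g x} := privateBorder_of_not hC2
  -- every border element of f at x is killed, i.e. is at distance 1 from u
  have hkill : ∀ w', w' ∈ privateBorder G f x →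
      w' ∈ privateNbhd G f x ∧ G.dist w' x = f x ∧ G.dist w' u = 1 := by
    intro w' hw'
    rw [hPBf] at hw'
    obtain ⟨hw'PN, hw'd⟩ := hw'
    have hw'hears : hears G f w' = {x} := hw'PN
    have hw'notg : w' ∉ privateNbhd G g x := by
      intro h
      have : w' ∈ privateBorder G g x := by
        rw [hPBg]
        exact ⟨h, by rw [hgx]; exact hw'd⟩
      rw [hxPB] at this
      exact Set.notMem_empty w' this
    have hw'u : G.dist w' u ≤ 1 := by
      by_contra h
      push_neg at h
      have : hears G g w' = hears G f w' := hhg' w' (by omega)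
      exact hw'notg (by rw [privateNbhd, Set.mem_setOf_eq, this]; exact hw'hears)
    have hw'ne : w' ≠ u := by
      rintro rfl
      have : x ∈ hears G f w' := by rw [hw'hears]; rfl
      rw [hu] at this
      exact Set.notMem_empty x this
    have : 0 < G.dist w' u := hG.pos_dist_of_ne hw'ne
    exact ⟨hw'PN, hw'd, by omega⟩
  refine ⟨x, hfx, hdux, ?_, hkill, ?_⟩
  · exact hf.1.2 x hfx
  · -- if f x = 1 then x hears some other vertex
    intro h1
    by_contra hz
    push_neg at hz
    have hhx : hears G f x = {x} := by
      apply le_antisymm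
      · intro z hzmem
        by_contra hzx
        exact (hz z (by simpa using hzx)) hzmem
      · simpa using self_mem_hears hfx
    have hxPNg : x ∈ privateNbhd G g x := by
      rw [privateNbhd, Set.mem_setOf_eq, hhg' x hdxu2]
      exact hhx
    have hPNne : privateNbhd G g x ≠ {x} := by
      intro h
      exact hC2 ⟨by omega, h⟩
    have hsub : ¬ privateNbhd G g x ⊆ {x} := by
      intro hs
      exact hPNne (le_antisymm hs (by simpa using hxPNg))
    obtain ⟨w'', hw''PN, hw''x⟩ := Set.not_subset.1 hsub
    have hw''ne : w'' ≠ x := by simpa using hw''x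
    have hd : G.dist w'' x ≤ g x := by
      have : x ∈ hears G g w'' := by
        rw [privateNbhd, Set.mem_setOf_eq] at hw''PN
        rw [hw''PN]; rfl
      exact this.2
    have hpos : 0 < G.dist w'' x := hG.pos_dist_of_ne hw''ne
    have : w'' ∈ privateBorder G g x := by
      rw [hPBg]
      exact ⟨hw''PN, by omega⟩
    rw [hxPB] at this
    exact Set.notMem_empty w'' this

end Broadcast

namespace Broadcast

lemma pathGraph_connected' {n : ℕ} (hn : 2 ≤ n) : (SimpleGraph.pathGraph n).Connected := by
  obtain ⟨m, rfl⟩ : ∃ m, n = m + 1 := ⟨n - 1, by omega⟩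
  exact SimpleGraph.pathGraph_connected m

lemma ecc_pathGraph_pos {n : ℕ} (hn : 2 ≤ n) (v : Fin n) :
    1 ≤ ecc (SimpleGraph.pathGraph n) v := by
  have : ∃ w : Fin n, w ≠ v := by
    by_cases h : v.val = 0
    · exact ⟨⟨1, by omega⟩, by intro hc; rw [Fin.ext_iff] at hc; simp [h] at hc⟩
    · exact ⟨⟨0, by omega⟩, by intro hc; rw [Fin.ext_iff] at hc; simp at hc; omega⟩
  obtain ⟨w, hw⟩ := this
  have h1 : 1 ≤ (SimpleGraph.pathGraph n).dist v w := by
    rw [pathGraph_dist]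
    have : v.val ≠ w.val := fun h => hw (Fin.ext h.symm)
    simp [Nat.dist]; omega
  exact le_trans h1 (Finset.le_sup (Finset.mem_univ w))

theorem path_witness {n : ℕ} (hn : 2 ≤ n) {f : Fin n → ℕ}
    (hf : IsMaximalIrredundant (SimpleGraph.pathGraph n) f) {u : Fin n}
    (hu : hears (SimpleGraph.pathGraph n) f u = ∅) :
    ∃ x : Fin n, 1 ≤ f x ∧ Nat.dist u.val x.val = f x + 1 ∧
      (∃ w, w ∈ privateBorder (SimpleGraph.pathGraph n) f x) ∧
      (∀ w', w' ∈ privateBorder (SimpleGraph.pathGraph n) f x →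
         Nat.dist w'.val x.val = f x ∧ Nat.dist w'.val u.val = 1) ∧
      (f x = 1 → ∃ z, z ≠ x ∧ 1 ≤ f z ∧ Nat.dist x.val z.val ≤ f z) := by
  obtain ⟨x, hfx, hdux, ⟨w, hwPB⟩, hkill, hz⟩ :=
    exists_witness_of_unheard (pathGraph_connected' hn) (ecc_pathGraph_pos hn) hf hu
  rw [pathGraph_dist] at hdux
  have hw1 := hkill w hwPB
  rw [pathGraph_dist, pathGraph_dist] at hw1
  have hdeq : Nat.dist u.val x.val = f x + 1 := by
    have ht : Nat.dist u.val x.val ≤ Nat.dist u.val w.val + Nat.dist w.val x.val :=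
      Nat.dist.triangle_inequality _ _ _
    have h2 : Nat.dist w.val u.val = 1 := hw1.2.2
    have h3 : Nat.dist w.val x.val = f x := hw1.2.1
    simp [Nat.dist] at *
    omega
  refine ⟨x, hfx, hdeq, ⟨w, hwPB⟩, ?_, ?_⟩
  · intro w' hw'
    have := hkill w' hw'
    rw [pathGraph_dist, pathGraph_dist] at this
    exact ⟨this.2.1, this.2.2⟩
  · intro h1
    obtain ⟨z, hznx, hzh⟩ := hz h1
    rw [mem_hears, pathGraph_dist] at hzh
    exact ⟨z, hznx, hzh.1, hzh.2⟩

end Broadcast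

namespace Broadcast

open Finset in
theorem cost_maximalIrredundant_pathGraph {n : ℕ} (hn : 2 ≤ n) {f : Fin n → ℕ}
    (hf : IsMaximalIrredundant (SimpleGraph.pathGraph n) f) :
    n ≤ 3 * cost f := by
  classical
  set G := SimpleGraph.pathGraph n with hG
  set Bp : Finset (Fin n) := univ.filter (fun x => 1 ≤ f x) with hBp
  set D : Finset (Fin n) := univ.filter (fun u => (hears G f u).Nonempty) with hD
  set U : Finset (Fin n) := univ.filter (fun u => ¬ (hears G f u).Nonempty) with hU
  set mult : Fin n → ℕ := fun u => (Bp.filter (fun x => Nat.dist u.val x.val ≤ f x)).card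
    with hmult
  -- basic partition
  have hDU : D.card + U.card = n := by
    rw [hD, hU]
    rw [Finset.card_filter_add_card_filter_not]
    simp
  -- each dominated vertex has mult ≥ 1
  have hmult1 : ∀ u ∈ D, 1 ≤ mult u := by
    intro u hu
    rw [hD, mem_filter] at hu
    obtain ⟨x, hx⟩ := hu.2
    rw [mem_hears] at hx
    have : x ∈ Bp.filter (fun x => Nat.dist u.val x.val ≤ f x) := by
      rw [mem_filter, hBp, mem_filter]
      refine ⟨⟨mem_univ x, hx.1⟩, ?_⟩
      rw [hG, pathGraph_dist] at hx
      exact hx.2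
    rw [hmult]
    exact Finset.card_pos.2 ⟨x, this⟩
  -- ball size bound
  have hball : ∀ x : Fin n, (univ.filter (fun u : Fin n => Nat.dist u.val x.val ≤ f x)).card
      ≤ 2 * f x + 1 := by
    intro x
    have : (univ.filter (fun u : Fin n => Nat.dist u.val x.val ≤ f x)).card
        ≤ (Finset.range (2 * f x + 1)).card := by
      apply Finset.card_le_card_of_injOn (fun u => u.val + f x - x.val)
      · intro u hu
        rw [Finset.mem_coe, mem_filter] at hu
        have := hu.2
        simp [Nat.dist] at this
        rw [Finset.mem_coe, Finset.mem_range]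
        dsimp only
        omega
      · intro u1 h1 u2 h2 heq
        rw [Finset.mem_coe, mem_filter] at h1 h2
        have e1 := h1.2; have e2 := h2.2
        simp [Nat.dist] at e1 e2
        apply Fin.ext
        simp at heq
        omega
    simpa using this
  -- total multiplicity bound
  have htot : ∑ u, mult u ≤ ∑ x ∈ Bp, (2 * f x + 1) := by
    have hswap : ∑ u, mult u
        = ∑ x ∈ Bp, (univ.filter (fun u : Fin n => Nat.dist u.val x.val ≤ f x)).card := by
      rw [hmult]
      simp only [Finset.card_filter]
      rw [Finset.sum_comm]
    rw [hswap]
    exact Finset.sum_le_sum fun x _ => hball x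
  -- witness function on U
  have hwit : ∀ u ∈ U, ∃ x : Fin n, 1 ≤ f x ∧ Nat.dist u.val x.val = f x + 1 ∧
      (∃ w, w ∈ privateBorder G f x) ∧
      (∀ w', w' ∈ privateBorder G f x →
         Nat.dist w'.val x.val = f x ∧ Nat.dist w'.val u.val = 1) ∧
      (f x = 1 → 2 ≤ mult x) := by
    intro u hu
    rw [hU, mem_filter, Set.not_nonempty_iff_eq_empty] at hu
    obtain ⟨x, h1, h2, h3, h4, h5⟩ := path_witness hn hf hu.2
    refine ⟨x, h1, h2, h3, h4, ?_⟩
    intro hfx1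
    obtain ⟨z, hz1, hz2, hz3⟩ := h5 hfx1
    have hxm : x ∈ Bp.filter (fun y => Nat.dist x.val y.val ≤ f y) := by
      rw [mem_filter, hBp, mem_filter]
      exact ⟨⟨mem_univ x, h1⟩, by simp [Nat.dist]⟩
    have hzm : z ∈ Bp.filter (fun y => Nat.dist x.val y.val ≤ f y) := by
      rw [mem_filter, hBp, mem_filter]
      exact ⟨⟨mem_univ z, hz2⟩, hz3⟩
    rw [hmult]
    exact Finset.one_lt_card.2 ⟨x, hxm, z, hzm, fun h => hz1 h.symm⟩
  -- choose the witness
  set φ : Fin n → Fin n := fun u => if h : u ∈ U then Classical.choose (hwit u h) else u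
    with hφ
  have hφspec : ∀ u (h : u ∈ U), 1 ≤ f (φ u) ∧ Nat.dist u.val (φ u).val = f (φ u) + 1 ∧
      (∃ w, w ∈ privateBorder G f (φ u)) ∧
      (∀ w', w' ∈ privateBorder G f (φ u) →
         Nat.dist w'.val (φ u).val = f (φ u) ∧ Nat.dist w'.val u.val = 1) ∧
      (f (φ u) = 1 → 2 ≤ mult (φ u)) := by
    intro u h
    rw [hφ]
    simp only [dif_pos h]
    exact Classical.choose_spec (hwit u h)
  -- injectivity on U
  have hφinj : Set.InjOn φ U := by
    intro u1 h1 u2 h2 heq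
    have s1 := hφspec u1 h1
    have s2 := hφspec u2 h2
    rw [heq] at s1
    obtain ⟨w, hw⟩ := s2.2.2.1
    have e1 := (s1.2.2.2.1 w hw)
    have e2 := (s2.2.2.2.1 w hw)
    have d1 := s1.2.1
    have d2 := s2.2.1
    apply Fin.ext
    simp [Nat.dist] at e1 e2 d1 d2
    omega
  -- split U
  set U2 : Finset (Fin n) := U.filter (fun u => 2 ≤ f (φ u)) with hU2
  set U1 : Finset (Fin n) := U.filter (fun u => ¬ 2 ≤ f (φ u)) with hU1
  have hU12 : U2.card + U1.card = U.card := by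
    rw [hU1, hU2]
    exact Finset.card_filter_add_card_filter_not (fun u => 2 ≤ f (φ u))
  -- bound U2
  have hbU2 : U2.card ≤ ∑ x ∈ Bp, (f x - 1) := by
    have himg : U2.card = (U2.image φ).card := by
      rw [Finset.card_image_of_injOn (hφinj.mono (by
        intro u hu
        rw [hU2, Finset.coe_filter] at hu
        exact hu.1))]
    rw [himg]
    have hsub : U2.image φ ⊆ Bp := by
      intro x hx
      rw [Finset.mem_image] at hx
      obtain ⟨u, hu, rfl⟩ := hx
      rw [hU2, mem_filter] at hu
      rw [hBp, mem_filter]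
      exact ⟨mem_univ _, by omega⟩
    calc (U2.image φ).card = ∑ x ∈ U2.image φ, 1 := by simp
      _ ≤ ∑ x ∈ U2.image φ, (f x - 1) := by
          apply Finset.sum_le_sum
          intro x hx
          rw [Finset.mem_image] at hx
          obtain ⟨u, hu, rfl⟩ := hx
          rw [hU2, mem_filter] at hu
          omega
      _ ≤ ∑ x ∈ Bp, (f x - 1) := Finset.sum_le_sum_of_subset hsub
  -- bound U1
  have hbU1 : U1.card ≤ ∑ u ∈ D, (mult u - 1) := by
    have himg : U1.card = (U1.image φ).card := by
      rw [Finset.card_image_of_injOn (hφinj.mono (by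
        intro u hu
        rw [hU1, Finset.coe_filter] at hu
        exact hu.1))]
    rw [himg]
    have hsub : U1.image φ ⊆ D := by
      intro x hx
      rw [Finset.mem_image] at hx
      obtain ⟨u, hu, rfl⟩ := hx
      rw [hU1, mem_filter] at hu
      have s := hφspec u hu.1
      rw [hD, mem_filter]
      exact ⟨mem_univ _, ⟨φ u, self_mem_hears s.1⟩⟩
    calc (U1.image φ).card = ∑ x ∈ U1.image φ, 1 := by simp
      _ ≤ ∑ x ∈ U1.image φ, (mult x - 1) := by
          apply Finset.sum_le_sum
          intro x hx
          rw [Finset.mem_image] at hx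
          obtain ⟨u, hu, rfl⟩ := hx
          rw [hU1, mem_filter] at hu
          have s := hφspec u hu.1
          have : f (φ u) = 1 := by
            have := s.1
            omega
          have := s.2.2.2.2 this
          omega
      _ ≤ ∑ u ∈ D, (mult u - 1) := Finset.sum_le_sum_of_subset hsub
  -- assemble
  have hDmult : D.card + ∑ u ∈ D, (mult u - 1) = ∑ u ∈ D, mult u := by
    have h0 : ∑ u ∈ D, ((mult u - 1) + 1) = ∑ u ∈ D, mult u := by
      apply Finset.sum_congr rfl
      intro u hu
      have := hmult1 u hu
      omega
    rw [Finset.sum_add_distrib] at h0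
    simp only [Finset.sum_const, smul_eq_mul, mul_one] at h0
    omega
  have hDtot : ∑ u ∈ D, mult u ≤ ∑ u, mult u :=
    Finset.sum_le_sum_of_subset (Finset.subset_univ D)
  have hfinal : (n : ℕ) ≤ ∑ x ∈ Bp, (2 * f x + 1) + ∑ x ∈ Bp, (f x - 1) := by
    have h1 : D.card + U1.card ≤ ∑ x ∈ Bp, (2 * f x + 1) := by
      calc D.card + U1.card ≤ D.card + ∑ u ∈ D, (mult u - 1) := by omega
        _ = ∑ u ∈ D, mult u := hDmult
        _ ≤ ∑ u, mult u := hDtot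
        _ ≤ ∑ x ∈ Bp, (2 * f x + 1) := htot
    omega
  have hsum3 : ∑ x ∈ Bp, (2 * f x + 1) + ∑ x ∈ Bp, (f x - 1) = ∑ x ∈ Bp, 3 * f x := by
    rw [← Finset.sum_add_distrib]
    apply Finset.sum_congr rfl
    intro x hx
    rw [hBp, mem_filter] at hx
    have := hx.2
    omega
  have hcost : ∑ x ∈ Bp, 3 * f x ≤ 3 * cost f := by
    rw [cost, Finset.mul_sum]
    exact Finset.sum_le_sum_of_subset_of_nonneg (Finset.subset_univ Bp)
      (fun _ _ _ => Nat.zero_le _)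
  omega

end Broadcast

namespace Broadcast

open Finset in
theorem cost_dominating_pathGraph {n : ℕ} {f : Fin n → ℕ}
    (hd : IsDominating (SimpleGraph.pathGraph n) f) : n ≤ 3 * cost f := by
  classical
  set G := SimpleGraph.pathGraph n with hG
  set Bp : Finset (Fin n) := univ.filter (fun x => 1 ≤ f x) with hBp
  set mult : Fin n → ℕ := fun u => (Bp.filter (fun x => Nat.dist u.val x.val ≤ f x)).card
    with hmult
  have hmult1 : ∀ u : Fin n, 1 ≤ mult u := by
    intro u
    obtain ⟨x, hx⟩ := hd.2 u
    rw [mem_hears] at hx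
    have : x ∈ Bp.filter (fun x => Nat.dist u.val x.val ≤ f x) := by
      rw [mem_filter, hBp, mem_filter]
      refine ⟨⟨mem_univ x, hx.1⟩, ?_⟩
      rw [hG, pathGraph_dist] at hx
      exact hx.2
    exact Finset.card_pos.2 ⟨x, this⟩
  have hball : ∀ x : Fin n, (univ.filter (fun u : Fin n => Nat.dist u.val x.val ≤ f x)).card
      ≤ 2 * f x + 1 := by
    intro x
    have : (univ.filter (fun u : Fin n => Nat.dist u.val x.val ≤ f x)).card
        ≤ (Finset.range (2 * f x + 1)).card := by
      apply Finset.card_le_card_of_injOn (fun u => u.val + f x - x.val)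
      · intro u hu
        rw [Finset.mem_coe, mem_filter] at hu
        have := hu.2
        simp [Nat.dist] at this
        rw [Finset.mem_coe, Finset.mem_range]
        dsimp only
        omega
      · intro u1 h1 u2 h2 heq
        rw [Finset.mem_coe, mem_filter] at h1 h2
        have e1 := h1.2; have e2 := h2.2
        simp [Nat.dist] at e1 e2
        apply Fin.ext
        simp at heq
        omega
    simpa using this
  have htot : ∑ u, mult u ≤ ∑ x ∈ Bp, (2 * f x + 1) := by
    have hswap : ∑ u, mult u
        = ∑ x ∈ Bp, (univ.filter (fun u : Fin n => Nat.dist u.val x.val ≤ f x)).card := by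
      rw [hmult]
      simp only [Finset.card_filter]
      rw [Finset.sum_comm]
    rw [hswap]
    exact Finset.sum_le_sum fun x _ => hball x
  have hn' : (n : ℕ) ≤ ∑ u, mult u := by
    calc (n : ℕ) = ∑ _u : Fin n, 1 := by simp
      _ ≤ ∑ u, mult u := Finset.sum_le_sum fun u _ => hmult1 u
  have h3 : ∑ x ∈ Bp, (2 * f x + 1) ≤ ∑ x ∈ Bp, 3 * f x := by
    apply Finset.sum_le_sum
    intro x hx
    rw [hBp, mem_filter] at hx
    omega
  have hcost : ∑ x ∈ Bp, 3 * f x ≤ 3 * cost f := by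
    rw [cost, Finset.mul_sum]
    exact Finset.sum_le_sum_of_subset_of_nonneg (Finset.subset_univ Bp)
      (fun _ _ _ => Nat.zero_le _)
  omega

end Broadcast

namespace Broadcast

open Finset in
theorem exists_dominating_pathGraph (n : ℕ) (hn : 2 ≤ n) :
    ∃ f : Fin n → ℕ, IsDominating (SimpleGraph.pathGraph n) f ∧ cost f ≤ (n + 2) / 3 := by
  classical
  set P : Fin n → Prop := fun v => v.val % 3 = 1 ∨ (v.val = n - 1 ∧ n % 3 = 1) with hP
  set f : Fin n → ℕ := fun v => if P v then 1 else 0 with hf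
  have hle1 : ∀ v, f v ≤ 1 := by
    intro v
    rw [hf]
    dsimp only
    split <;> omega
  have hbr : IsBroadcast (SimpleGraph.pathGraph n) f :=
    fun v => le_trans (hle1 v) (ecc_pathGraph_pos hn v)
  have hone : ∀ v : Fin n, P v → f v = 1 := by
    intro v hv
    rw [hf]; exact if_pos hv
  have hdist : ∀ u x : Fin n, (SimpleGraph.pathGraph n).dist u x = Nat.dist u.val x.val :=
    fun u x => pathGraph_dist u x
  refine ⟨f, ⟨hbr, ?_⟩, ?_⟩
  · intro u
    have hu := u.isLt
    by_cases h1 : u.val % 3 = 1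
    · refine ⟨u, ?_, ?_⟩
      · rw [hone u (Or.inl h1)]
      · rw [hone u (Or.inl h1), SimpleGraph.dist_self]; omega
    · by_cases h2 : u.val % 3 = 2
      · have hlt : u.val - 1 < n := by omega
        have hPx : P (⟨u.val - 1, hlt⟩ : Fin n) := Or.inl (by simp; omega)
        refine ⟨⟨u.val - 1, hlt⟩, ?_, ?_⟩
        · rw [hone _ hPx]
        · rw [hone _ hPx, hdist]
          simp [Nat.dist]
          omega
      · -- u.val % 3 = 0
        by_cases h3 : u.val = n - 1
        · have hPu : P u := by
            right
            constructor
            · exact h3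
            · omega
          refine ⟨u, ?_, ?_⟩
          · rw [hone u hPu]
          · rw [hone u hPu, SimpleGraph.dist_self]; omega
        · have hlt : u.val + 1 < n := by omega
          have hPx : P (⟨u.val + 1, hlt⟩ : Fin n) := Or.inl (by simp; omega)
          refine ⟨⟨u.val + 1, hlt⟩, ?_, ?_⟩
          · rw [hone _ hPx]
          · rw [hone _ hPx, hdist]
            simp [Nat.dist]
  · -- cost bound
    have hc : cost f = (univ.filter P).card := by
      rw [cost, Finset.card_filter]
    rw [hc]
    have : (univ.filter P).card ≤ (Finset.range ((n + 2) / 3)).card := by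
      apply Finset.card_le_card_of_injOn (fun v => v.val / 3)
      · intro v hv
        rw [Finset.mem_coe, mem_filter, hP] at hv
        rw [Finset.mem_coe, Finset.mem_range]
        dsimp only
        have := v.isLt
        rcases hv.2 with h | ⟨h, hm⟩ <;> omega
      · intro v1 h1 v2 h2 heq
        rw [Finset.mem_coe, mem_filter, hP] at h1 h2
        have hv1 := v1.isLt
        have hv2 := v2.isLt
        simp only at heq
        apply Fin.ext
        rcases h1.2 with ha | ⟨ha, hm⟩ <;> rcases h2.2 with hb | ⟨hb, hm'⟩ <;> omega
    simpa using this

end Broadcast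


open Broadcast in
/-- For every integer n ≥ 2, ir_b(P_n) = γ_b(P_n) = ⌈n/3⌉. -/
theorem broadcastIrredundance_pathGraph (n : ℕ) (hn : 2 ≤ n) :
    broadcastIrredundance (SimpleGraph.pathGraph n) =
      broadcastDomination (SimpleGraph.pathGraph n) ∧
    broadcastDomination (SimpleGraph.pathGraph n) = (n + 2) / 3 := by
  classical
  obtain ⟨f0, hf0dom, hf0cost⟩ := exists_dominating_pathGraph n hn
  have hconn := pathGraph_connected' hn
  have hdom_eq : broadcastDomination (SimpleGraph.pathGraph n) = (n + 2) / 3 := by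
    rw [broadcastDomination]
    apply le_antisymm
    · exact le_trans (Nat.sInf_le ⟨f0, hf0dom, rfl⟩) hf0cost
    · refine le_csInf ⟨cost f0, ⟨f0, hf0dom, rfl⟩⟩ ?_
      rintro c ⟨f, hfdom, rfl⟩
      have := cost_dominating_pathGraph hfdom
      omega
  obtain ⟨g, hgmin, hgcost⟩ := exists_isMinimalDominating_le hf0dom
  have hgmaxirr := isMaximalIrredundant_of_isMinimalDominating hconn hgmin
  have hirr_eq : broadcastIrredundance (SimpleGraph.pathGraph n) = (n + 2) / 3 := by
    rw [broadcastIrredundance]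
    apply le_antisymm
    · exact le_trans (Nat.sInf_le ⟨g, hgmaxirr, rfl⟩) (le_trans hgcost hf0cost)
    · refine le_csInf ⟨cost g, ⟨g, hgmaxirr, rfl⟩⟩ ?_
      rintro c ⟨f, hfmax, rfl⟩
      have := cost_maximalIrredundant_pathGraph hn hfmax
      omega
  exact ⟨by rw [hdom_eq, hirr_eq], hdom_eq⟩
end

section
/- For every integer n ≥ 2, the broadcast packing number of the path P_n equals its diameter, i.e. P_b(P_n) = n − 1. -/
open SimpleGraph

section PathAux

open SimpleGraph

lemma pathGraph_walk_length_ge {n : ℕ} {i j : Fin n} (w : (pathGraph n).Walk i j) :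
    max i.val j.val - min i.val j.val ≤ w.length := by
  induction w with
  | nil => simp
  | cons h w ih =>
    rw [pathGraph_adj] at h
    rw [SimpleGraph.Walk.length_cons]
    omega

lemma pathGraph_conn {n : ℕ} (i : Fin n) : (pathGraph n).Connected := by
  cases n with
  | zero => exact i.elim0
  | succ m => exact pathGraph_connected m

lemma pathGraph_dist_le_aux : ∀ (d n : ℕ) (i j : Fin n), j.val = i.val + d →
    (pathGraph n).dist i j ≤ d := by
  intro d
  induction d with
  | zero =>
    intro n i j h
    have : i = j := Fin.ext (by omega)
    subst this; simp
  | succ d ih =>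
    intro n i j h
    have hk : i.val + 1 < n := by have := j.isLt; omega
    set k : Fin n := ⟨i.val + 1, hk⟩ with hkdef
    have hadj : (pathGraph n).Adj i k := by rw [pathGraph_adj]; left; rfl
    have h1 : (pathGraph n).dist i k = 1 := by
      rw [SimpleGraph.dist_eq_one_iff_adj]; exact hadj
    have h2 : (pathGraph n).dist k j ≤ d := ih n k j (by simp [hkdef]; omega)
    calc (pathGraph n).dist i j ≤ (pathGraph n).dist i k + (pathGraph n).dist k j :=
          (pathGraph_conn i).dist_triangle
      _ ≤ 1 + d := by omega
      _ = d + 1 := by omega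

lemma pathGraph_dist_s15 {n : ℕ} (i j : Fin n) :
    (pathGraph n).dist i j = max i.val j.val - min i.val j.val := by
  apply le_antisymm
  · rcases le_total i.val j.val with h | h
    · have := pathGraph_dist_le_aux (j.val - i.val) n i j (by omega)
      omega
    · have := pathGraph_dist_le_aux (i.val - j.val) n j i (by omega)
      rw [SimpleGraph.dist_comm]
      omega
  · obtain ⟨w, hw⟩ := ((pathGraph_conn i) i j).exists_walk_length_eq_dist
    rw [← hw]
    exact pathGraph_walk_length_ge w

lemma pathGraph_ecc {n : ℕ} (hn : 1 ≤ n) (v : Fin n) :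
    Broadcast.ecc (pathGraph n) v = max v.val (n - 1 - v.val) := by
  apply le_antisymm
  · apply Finset.sup_le
    intro u _
    rw [pathGraph_dist_s15]
    have := u.isLt
    omega
  · have h0 : (0 : ℕ) < n := hn
    have hlast : n - 1 < n := by omega
    rcases le_total v.val (n - 1 - v.val) with h | h
    · refine le_trans ?_ (Finset.le_sup (f := fun u => (pathGraph n).dist v u)
        (Finset.mem_univ (⟨n - 1, hlast⟩ : Fin n)))
      simp only [pathGraph_dist_s15]
      have hv := v.isLt
      simp; omega
    · refine le_trans ?_ (Finset.le_sup (f := fun u => (pathGraph n).dist v u)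
        (Finset.mem_univ (⟨0, h0⟩ : Fin n)))
      simp only [pathGraph_dist_s15]
      simp; omega

lemma pathGraph_ball_card {n : ℕ} (f : Fin n → ℕ) (hb : Broadcast.IsBroadcast (pathGraph n) f)
    (v : Fin n) (hv : 1 ≤ f v) :
    f v + 1 ≤ (Finset.univ.filter fun u => (pathGraph n).dist u v ≤ f v).card := by
  have hn : 1 ≤ n := by have := v.isLt; omega
  have hecc := hb v
  rw [pathGraph_ecc hn v] at hecc
  rcases le_or_gt (f v) v.val with h | h
  · have : Finset.range (f v + 1) ⊆
        (Finset.univ.filter fun u => (pathGraph n).dist u v ≤ f v).image (fun u => v.val - u.val) := by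
      intro k hk
      rw [Finset.mem_range] at hk
      refine Finset.mem_image.2 ⟨⟨v.val - k, by have := v.isLt; omega⟩, ?_, by simp; omega⟩
      simp only [Finset.mem_filter, Finset.mem_univ, true_and, pathGraph_dist_s15]
      simp; omega
    calc f v + 1 = (Finset.range (f v + 1)).card := by simp
      _ ≤ _ := Finset.card_le_card this
      _ ≤ _ := Finset.card_image_le
  · have h2 : f v ≤ n - 1 - v.val := by omega
    have : Finset.range (f v + 1) ⊆
        (Finset.univ.filter fun u => (pathGraph n).dist u v ≤ f v).image (fun u => u.val - v.val) := by
      intro k hk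
      rw [Finset.mem_range] at hk
      refine Finset.mem_image.2 ⟨⟨v.val + k, by omega⟩, ?_, by simp⟩
      simp only [Finset.mem_filter, Finset.mem_univ, true_and, pathGraph_dist_s15]
      simp; omega
    calc f v + 1 = (Finset.range (f v + 1)).card := by simp
      _ ≤ _ := Finset.card_le_card this
      _ ≤ _ := Finset.card_image_le

open Classical in
lemma pathGraph_packing_cost_le {n : ℕ} (hn : 1 ≤ n) (f : Fin n → ℕ)
    (hf : Broadcast.IsPacking (pathGraph n) f) : Broadcast.cost f ≤ n - 1 := by
  classical
  set S : Finset (Fin n) := Finset.univ.filter fun v => 1 ≤ f v with hS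
  have hcost : Broadcast.cost f = ∑ v ∈ S, f v := by
    rw [Broadcast.cost, ← Finset.sum_filter_add_sum_filter_not Finset.univ (fun v => 1 ≤ f v)]
    have : ∑ v ∈ Finset.univ.filter (fun v => ¬ 1 ≤ f v), f v = 0 := by
      apply Finset.sum_eq_zero
      intro v hv
      simp only [Finset.mem_filter] at hv
      omega
    rw [this, add_zero, hS]
  rcases S.eq_empty_or_nonempty with he | hne
  · rw [hcost, he]; simp
  · set ball : Fin n → Finset (Fin n) :=
      fun v => Finset.univ.filter fun u => (pathGraph n).dist u v ≤ f v with hball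
    have hdisj : ∀ v ∈ S, ∀ w ∈ S, v ≠ w → Disjoint (ball v) (ball w) := by
      intro v hv w hw hvw
      rw [Finset.disjoint_left]
      intro u hu hu'
      simp only [hball, Finset.mem_filter, Finset.mem_univ, true_and] at hu hu'
      simp only [hS, Finset.mem_filter, Finset.mem_univ, true_and] at hv hw
      exact hvw (hf.2 u ⟨hv, hu⟩ ⟨hw, hu'⟩)
    have hcard : ∑ v ∈ S, (ball v).card ≤ n := by
      rw [← Finset.card_biUnion hdisj]
      calc (S.biUnion ball).card ≤ (Finset.univ : Finset (Fin n)).card :=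
            Finset.card_le_card (Finset.subset_univ _)
        _ = n := by simp
    have hlb : ∑ v ∈ S, (f v + 1) ≤ ∑ v ∈ S, (ball v).card := by
      apply Finset.sum_le_sum
      intro v hv
      simp only [hS, Finset.mem_filter, Finset.mem_univ, true_and] at hv
      exact pathGraph_ball_card f hf.1 v hv
    rw [Finset.sum_add_distrib] at hlb
    have hScard : 1 ≤ S.card := Finset.card_pos.2 hne
    simp only [Finset.sum_const, smul_eq_mul, mul_one] at hlb
    omega

end PathAux

open Broadcast in
/-- For every integer n ≥ 2, P_b(P_n) = diam(P_n) = n − 1. -/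
theorem broadcastPacking_pathGraph (n : ℕ) (hn : 2 ≤ n) :
    broadcastPacking (SimpleGraph.pathGraph n) = n - 1 := by
  classical
  have hn1 : 1 ≤ n := by omega
  have hub : ∀ c ∈ {c | ∃ f, IsPacking (SimpleGraph.pathGraph n) f ∧ cost f = c}, c ≤ n - 1 := by
    rintro c ⟨f, hf, rfl⟩
    exact pathGraph_packing_cost_le hn1 f hf
  have hbdd : BddAbove {c | ∃ f, IsPacking (SimpleGraph.pathGraph n) f ∧ cost f = c} :=
    ⟨n - 1, hub⟩
  -- the witness broadcast: n-1 at vertex 0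
  set z : Fin n := ⟨0, by omega⟩ with hz
  set f : Fin n → ℕ := fun v => if v = z then n - 1 else 0 with hfdef
  have hfb : IsBroadcast (SimpleGraph.pathGraph n) f := by
    intro v
    by_cases h : v = z
    · subst h
      rw [pathGraph_ecc hn1]
      simp [hfdef, hz]
    · simp [hfdef, h]
  have hfp : IsPacking (SimpleGraph.pathGraph n) f := by
    refine ⟨hfb, fun u a ha b hb => ?_⟩
    simp only [hears, Set.mem_setOf_eq] at ha hb
    have ha' : a = z := by
      by_contra h; simp [hfdef, h] at ha
    have hb' : b = z := by
      by_contra h; simp [hfdef, h] at hb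
    rw [ha', hb']
  have hcost : cost f = n - 1 := by
    rw [cost, hfdef]
    simp [Finset.sum_ite_eq']
  have hmem : (n - 1) ∈ {c | ∃ f, IsPacking (SimpleGraph.pathGraph n) f ∧ cost f = c} :=
    ⟨f, hfp, hcost⟩
  exact le_antisymm (csSup_le ⟨n - 1, hmem⟩ hub) (le_csSup hbdd hmem)
end

section
/- For every integer n ≥ 3, the broadcast packing number of the cycle C_n equals its diameter, i.e. P_b(C_n) = ⌊n/2⌋. -/
open SimpleGraph

section CycleAux

open SimpleGraph Finset Broadcast
open scoped Fin.CommRing Fin.NatCast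

private lemma cycAux_conn {n : ℕ} (h : 1 ≤ n) : (SimpleGraph.cycleGraph n).Connected := by
  cases n with
  | zero => omega
  | succ m => exact SimpleGraph.cycleGraph_connected

private lemma cycAux_sub_val_add {n : ℕ} [NeZero n] (hn : 3 ≤ n) {u v : Fin n} (huv : u ≠ v) :
    (v - u).val + (u - v).val = n := by
  have h1 : v - u ≠ 0 := sub_ne_zero.mpr (Ne.symm huv)
  have h2 : u - v ≠ 0 := sub_ne_zero.mpr huv
  have h3 : (v - u) + (u - v) = 0 := by ring
  have h4 := Fin.val_add (v - u) (u - v)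
  rw [h3, Fin.val_zero] at h4
  have h5 : (v - u).val < n := (v - u).isLt
  have h6 : (u - v).val < n := (u - v).isLt
  simp only [Ne, Fin.ext_iff, Fin.val_zero] at h1 h2
  obtain ⟨k, hk⟩ := Nat.dvd_of_mod_eq_zero h4.symm
  match k, hk with
  | 0, hk => omega
  | 1, hk => omega
  | (k + 2), hk =>
    have : n * 2 ≤ n * (k + 2) := Nat.mul_le_mul_left n (by omega)
    omega

/-- If `x = y + 1` in `Fin n` then subtraction values shift by one (mod n). -/
private lemma cycAux_shift {n : ℕ} [NeZero n] (hn : 3 ≤ n) {x y : Fin n} (h : x - y = 1) (z : Fin n) :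
    (x - z).val = ((y - z).val + 1) % n ∧ (z - y).val = ((z - x).val + 1) % n := by
  haveI : NeZero n := ⟨by omega⟩
  have h1 : (1 : Fin n).val = 1 := by rw [Fin.val_one']; exact Nat.mod_eq_of_lt (by omega)
  constructor
  · have hxz : x - z = (y - z) + 1 := by rw [← h]; ring
    rw [hxz, Fin.val_add, h1]
  · have hzy : z - y = (z - x) + 1 := by rw [← h]; ring
    rw [hzy, Fin.val_add, h1]

private lemma cycAux_mod_cases {x y n : ℕ} (hx : x < n) (h : y = (x + 1) % n) :
    y = x + 1 ∨ (x + 1 = n ∧ y = 0) := by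
  rcases Nat.lt_or_ge (x + 1) n with h' | h'
  · left; rw [h, Nat.mod_eq_of_lt h']
  · right
    have hxn : x + 1 = n := by omega
    exact ⟨hxn, by rw [h, hxn, Nat.mod_self]⟩

private lemma cycAux_step {n : ℕ} [NeZero n] (hn : 3 ≤ n) {u w : Fin n}
    (h : (SimpleGraph.cycleGraph n).Adj u w) (v : Fin n) :
    min (v - u).val (u - v).val ≤ min (v - w).val (w - v).val + 1 := by
  haveI : NeZero n := ⟨by omega⟩
  rw [SimpleGraph.cycleGraph_adj'] at h
  have h1 : (1 : Fin n).val = 1 := by rw [Fin.val_one']; exact Nat.mod_eq_of_lt (by omega)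
  by_cases huv : u = v
  · rw [huv]
    simp
  by_cases hwv : w = v
  · rw [hwv] at h ⊢
    simp only [sub_self, Fin.val_zero]
    omega
  have hAB := cycAux_sub_val_add hn huv
  have hCD := cycAux_sub_val_add hn hwv
  have hC : (v - w).val < n := (v - w).isLt
  have hD : (w - v).val < n := (w - v).isLt
  rcases h with h | h
  · -- (u - w).val = 1, i.e. u = w + 1
    have he : u - w = 1 := Fin.ext (by rw [h, h1])
    have hs := cycAux_shift hn he v
    have d1 := cycAux_mod_cases (w - v).isLt hs.1
    have d2 := cycAux_mod_cases (v - u).isLt hs.2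
    omega
  · -- (w - u).val = 1, i.e. w = u + 1
    have he : w - u = 1 := Fin.ext (by rw [h, h1])
    have hs := cycAux_shift hn he v
    have d1 := cycAux_mod_cases (u - v).isLt hs.1
    have d2 := cycAux_mod_cases (v - w).isLt hs.2
    omega

private lemma cycAux_walk_ge {n : ℕ} [NeZero n] (hn : 3 ≤ n) (v : Fin n) :
    ∀ {u : Fin n} (p : (SimpleGraph.cycleGraph n).Walk u v),
      min (v - u).val (u - v).val ≤ p.length := by
  intro u p
  induction p with
  | nil => simp
  | @cons a b c hadj q ih =>
    rw [SimpleGraph.Walk.length_cons]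
    have := cycAux_step hn hadj c
    omega

private lemma cycAux_dist_add_le {n : ℕ} [NeZero n] (hn : 3 ≤ n) (u : Fin n) (m : ℕ) :
    (SimpleGraph.cycleGraph n).dist u (u + (m : Fin n)) ≤ m := by
  haveI : NeZero n := ⟨by omega⟩
  induction m with
  | zero => simp [SimpleGraph.dist_self]
  | succ m ih =>
    have hadj : (SimpleGraph.cycleGraph n).Adj (u + (m : Fin n)) (u + ((m + 1 : ℕ) : Fin n)) := by
      rw [SimpleGraph.cycleGraph_adj']
      right
      have he : (u + ((m + 1 : ℕ) : Fin n)) - (u + (m : Fin n)) = 1 := by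
        push_cast; ring
      rw [he, Fin.val_one']
      exact Nat.mod_eq_of_lt (by omega)
    have h1 : (SimpleGraph.cycleGraph n).dist (u + (m : Fin n)) (u + ((m + 1 : ℕ) : Fin n)) ≤ 1 := by
      have := SimpleGraph.dist_le hadj.toWalk
      simpa using this
    have h2 := (cycAux_conn (n := n) (by omega)).dist_triangle
      (u := u) (v := u + (m : Fin n)) (w := u + ((m + 1 : ℕ) : Fin n))
    omega

private lemma cycAux_dist {n : ℕ} [NeZero n] (hn : 3 ≤ n) (u v : Fin n) :
    (SimpleGraph.cycleGraph n).dist u v = min (v - u).val (u - v).val := by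
  haveI : NeZero n := ⟨by omega⟩
  apply le_antisymm
  · apply le_min
    · have h := cycAux_dist_add_le hn u (v - u).val
      have he : u + ((v - u).val : Fin n) = v := by
        rw [Fin.cast_val_eq_self]; ring
      rwa [he] at h
    · have h := cycAux_dist_add_le hn v (u - v).val
      have he : v + ((u - v).val : Fin n) = u := by
        rw [Fin.cast_val_eq_self]; ring
      rw [he] at h
      rwa [SimpleGraph.dist_comm] at h
  · obtain ⟨p, hp⟩ := (cycAux_conn (n := n) (by omega)).exists_walk_length_eq_dist u v
    rw [← hp]
    exact cycAux_walk_ge hn v p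

private lemma cycAux_natCast_val {n : ℕ} [NeZero n] {m : ℕ} (h : m < n) :
    ((m : Fin n)).val = m := by
  rw [Fin.val_natCast]; exact Nat.mod_eq_of_lt h

private lemma cycAux_ecc {n : ℕ} [NeZero n] (hn : 3 ≤ n) (v : Fin n) :
    Broadcast.ecc (SimpleGraph.cycleGraph n) v = n / 2 := by
  haveI : NeZero n := ⟨by omega⟩
  apply le_antisymm
  · apply Finset.sup_le
    intro u _
    rw [cycAux_dist hn v u]
    by_cases h : v = u
    · subst h; simp
    · have := cycAux_sub_val_add hn (Ne.symm h)
      omega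
  · have hlt : n / 2 < n := by omega
    set c : Fin n := ((n / 2 : ℕ) : Fin n) with hc
    have hcv : c.val = n / 2 := cycAux_natCast_val hlt
    have hcne : c ≠ 0 := by
      intro h
      rw [h, Fin.val_zero] at hcv
      omega
    have hune : v + c ≠ v := by
      intro h
      apply hcne
      calc c = v + c - v := by ring
        _ = v - v := by rw [h]
        _ = 0 := sub_self v
    have key : (SimpleGraph.cycleGraph n).dist v (v + c) = n / 2 := by
      rw [cycAux_dist hn]
      have h1 : (v + c) - v = c := by ring
      have h2 := cycAux_sub_val_add hn hune
      rw [h1] at h2 ⊢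
      omega
    calc n / 2 = (SimpleGraph.cycleGraph n).dist v (v + c) := key.symm
      _ ≤ _ := Finset.le_sup (Finset.mem_univ (v + c))

private lemma cycAux_cost_le {n : ℕ} (hn : 3 ≤ n) (f : Fin n → ℕ)
    (hf : Broadcast.IsPacking (SimpleGraph.cycleGraph n) f) :
    Broadcast.cost f ≤ n / 2 := by
  haveI : NeZero n := ⟨by omega⟩
  classical
  have hb : ∀ v, f v ≤ n / 2 := by
    intro v
    have := hf.1 v
    rwa [cycAux_ecc hn v] at this
  by_cases hbig : ∃ v, n < 2 * f v + 1
  · obtain ⟨v, hv⟩ := hbig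
    have hv1 : 1 ≤ f v := by omega
    have hdist : ∀ w, (SimpleGraph.cycleGraph n).dist w v ≤ f v := by
      intro w
      rw [cycAux_dist hn w v]
      by_cases h : w = v
      · subst h; simp
      · have := cycAux_sub_val_add hn h
        omega
    have honly : ∀ w, 1 ≤ f w → w = v := by
      intro w hw
      have h1 : w ∈ Broadcast.hears (SimpleGraph.cycleGraph n) f w :=
        ⟨hw, by simp [SimpleGraph.dist_self]⟩
      have h2 : v ∈ Broadcast.hears (SimpleGraph.cycleGraph n) f w := ⟨hv1, hdist w⟩
      exact hf.2 w h1 h2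
    have hcost : Broadcast.cost f = f v := by
      rw [Broadcast.cost]
      apply Finset.sum_eq_single
      · intro w _ hw
        by_contra h
        exact hw (honly w (by omega))
      · intro h
        exact absurd (Finset.mem_univ v) h
    rw [hcost]
    exact hb v
  · push_neg at hbig
    set B := Finset.univ.filter (fun v : Fin n => 1 ≤ f v) with hB
    set ball : Fin n → Finset (Fin n) :=
      fun v => Finset.univ.filter (fun u => (SimpleGraph.cycleGraph n).dist u v ≤ f v) with hball
    have hcard : ∀ v ∈ B, 2 * f v + 1 ≤ (ball v).card := by
      intro v hv
      have h2r : 2 * f v + 1 ≤ n := hbig v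
      have hle : (Finset.range (2 * f v + 1)).card ≤ (ball v).card := by
        refine Finset.card_le_card_of_injOn
          (fun i => v + (i : Fin n) - ((f v : ℕ) : Fin n)) ?_ ?_
        · intro i hi
          simp only [Finset.mem_coe, Finset.mem_range] at hi
          simp only [Finset.mem_coe, hball, Finset.mem_filter, Finset.mem_univ, true_and]
          rw [cycAux_dist hn]
          rcases le_or_gt (f v) i with h | h
          · have he : (v + (i : Fin n) - ((f v : ℕ) : Fin n)) - v = (((i - f v : ℕ)) : Fin n) := by
              rw [Nat.cast_sub h]; ring
            have hval : ((v + (i : Fin n) - ((f v : ℕ) : Fin n)) - v).val = i - f v := by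
              rw [he]; exact cycAux_natCast_val (by omega)
            have := min_le_right ((v - (v + (i : Fin n) - ((f v : ℕ) : Fin n))).val)
              ((v + (i : Fin n) - ((f v : ℕ) : Fin n) - v).val)
            omega
          · have he : v - (v + (i : Fin n) - ((f v : ℕ) : Fin n)) = (((f v - i : ℕ)) : Fin n) := by
              rw [Nat.cast_sub (le_of_lt h)]; ring
            have hval : (v - (v + (i : Fin n) - ((f v : ℕ) : Fin n))).val = f v - i := by
              rw [he]; exact cycAux_natCast_val (by omega)
            have := min_le_left ((v - (v + (i : Fin n) - ((f v : ℕ) : Fin n))).val)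
              ((v + (i : Fin n) - ((f v : ℕ) : Fin n) - v).val)
            omega
        · intro i hi j hj hij
          simp only [Finset.coe_range, Set.mem_Iio] at hi hj
          have h1 : (i : Fin n) = (j : Fin n) := by
            have h2 : v + (i : Fin n) = v + (j : Fin n) := sub_left_inj.mp hij
            exact add_left_cancel h2
          have h3 := congrArg Fin.val h1
          rw [cycAux_natCast_val (by omega), cycAux_natCast_val (by omega)] at h3
          exact h3
      simpa using hle
    have hdisj : ∀ v ∈ B, ∀ w ∈ B, v ≠ w → Disjoint (ball v) (ball w) := by
      intro v hv w hw hvw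
      rw [Finset.disjoint_left]
      intro u hu hu'
      simp only [hball, Finset.mem_filter, Finset.mem_univ, true_and] at hu hu'
      simp only [hB, Finset.mem_filter, Finset.mem_univ, true_and] at hv hw
      exact hvw (hf.2 u ⟨hv, hu⟩ ⟨hw, hu'⟩)
    have hsum : ∑ v ∈ B, (2 * f v + 1) ≤ n := by
      calc ∑ v ∈ B, (2 * f v + 1) ≤ ∑ v ∈ B, (ball v).card := Finset.sum_le_sum hcard
        _ = (B.biUnion ball).card := (Finset.card_biUnion hdisj).symm
        _ ≤ (Finset.univ : Finset (Fin n)).card := Finset.card_le_card (Finset.subset_univ _)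
        _ = n := by simp
    have hcost : Broadcast.cost f = ∑ v ∈ B, f v := by
      rw [Broadcast.cost]
      symm
      apply Finset.sum_subset (Finset.subset_univ _)
      intro x _ hx
      simp only [hB, Finset.mem_filter, Finset.mem_univ, true_and, not_le] at hx
      omega
    have hexp : ∑ v ∈ B, (2 * f v + 1) = 2 * (∑ v ∈ B, f v) + B.card := by
      rw [Finset.sum_add_distrib, Finset.mul_sum]
      simp [Finset.sum_const, Finset.mul_sum]
    by_cases hBe : B = ∅
    · rw [hcost, hBe]
      simp
    · have hb1 : 1 ≤ B.card := Finset.card_pos.mpr (Finset.nonempty_iff_ne_empty.mpr hBe)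
      omega

private lemma cycAux_exists_packing {n : ℕ} (hn : 3 ≤ n) :
    ∃ f : Fin n → ℕ, Broadcast.IsPacking (SimpleGraph.cycleGraph n) f ∧
      Broadcast.cost f = n / 2 := by
  haveI : NeZero n := ⟨by omega⟩
  classical
  refine ⟨fun u => if u = 0 then n / 2 else 0, ⟨?_, ?_⟩, ?_⟩
  · intro v
    by_cases h : v = 0 <;> simp [h, cycAux_ecc hn]
  · intro u v hv w hw
    have hz : ∀ x, x ∈ Broadcast.hears (SimpleGraph.cycleGraph n)
        (fun u => if u = 0 then n / 2 else 0) u → x = 0 := by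
      intro x hx
      by_contra h
      have := hx.1
      simp [h] at this
    rw [hz v hv, hz w hw]
  · rw [Broadcast.cost]
    simp

end CycleAux

open Broadcast in
/-- For every integer n ≥ 3, P_b(C_n) = diam(C_n) = ⌊n/2⌋. -/
theorem broadcastPacking_cycleGraph (n : ℕ) (hn : 3 ≤ n) :
    broadcastPacking (SimpleGraph.cycleGraph n) = n / 2 := by
  have hmem : (n / 2) ∈ {c | ∃ f, Broadcast.IsPacking (SimpleGraph.cycleGraph n) f ∧
      Broadcast.cost f = c} := by
    haveI : NeZero n := ⟨by omega⟩
    exact cycAux_exists_packing hn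
  have hub : ∀ c ∈ {c | ∃ f, Broadcast.IsPacking (SimpleGraph.cycleGraph n) f ∧
      Broadcast.cost f = c}, c ≤ n / 2 := by
    rintro c ⟨f, hf, rfl⟩
    exact cycAux_cost_le hn f hf
  exact le_antisymm (csSup_le ⟨_, hmem⟩ hub) (le_csSup ⟨n / 2, fun c hc => hub c hc⟩ hmem)
end
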